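/- arXiv:2101.02731 — 8 statements merged into one kernel-verified Lean document; each statement's English description precedes it below -/
import Mathlib

section
/- Let a, b > 0, r > 1, T > 0, and A > 0 with bA^r > a (equivalently A > (a/b)^{1/r}). Then the terminal value problem y'(t) = a − b|y(t)|^r on [0,T], y(T) = −A, admits a unique differentiable solution y : [0,T] → ℝ. Moreover y is monotone decreasing on [0,T] and satisfies −A ≤ y(t) < −(a/b)^{1/r} for every t ∈ [0,T]. -/
open Set Real

lemma my_hasDerivAt_v {a b r : ℝ} (hr : 1 < r) (x : ℝ) :
    HasDerivAt (fun x : ℝ => a - b * |x| ^ r) (-(b * (r * |x| ^ (r - 2) * x))) x :=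
  ((hasDerivAt_abs_rpow x hr).const_mul b).const_sub a

lemma my_lip {a b r : ℝ} (hb : 0 < b) (hr : 1 < r) (R : ℝ) (hR : 0 ≤ R) :
    LipschitzOnWith (b * (r * (1 + R) ^ (r - 1))).toNNReal
      (fun x : ℝ => a - b * |x| ^ r) (Metric.closedBall (0:ℝ) R) := by
  apply (convex_closedBall (0:ℝ) R).lipschitzOnWith_of_nnnorm_hasDerivWithin_le
    (f' := fun x => -(b * (r * |x| ^ (r - 2) * x)))
    (fun x _ => (my_hasDerivAt_v hr x).hasDerivWithinAt)
  intro x hx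
  rw [mem_closedBall_zero_iff, Real.norm_eq_abs] at hx
  have hbound : ‖-(b * (r * |x| ^ (r - 2) * x))‖ ≤ b * (r * (1 + R) ^ (r - 1)) := by
    rw [norm_neg, Real.norm_eq_abs]
    have hkey : |x| ^ (r - 2) * |x| ≤ (1 + R) ^ (r - 1) := by
      rcases eq_or_ne x 0 with h0 | h0
      · simp only [h0, abs_zero, mul_zero]
        positivity
      · have hax : (0:ℝ) < |x| := abs_pos.mpr h0
        have : |x| ^ (r - 2) * |x| = |x| ^ (r - 1) := by
          rw [show r - 1 = (r - 2) + 1 by ring, Real.rpow_add hax, Real.rpow_one]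
        rw [this]
        exact Real.rpow_le_rpow (abs_nonneg x) (by linarith) (by linarith)
    calc |b * (r * |x| ^ (r - 2) * x)| = b * (r * (|x| ^ (r - 2) * |x|)) := by
          rw [abs_mul, abs_mul, abs_mul, abs_of_nonneg hb.le,
            abs_of_nonneg (by linarith : (0:ℝ) ≤ r),
            abs_of_nonneg (Real.rpow_nonneg (abs_nonneg x) _), mul_assoc]
      _ ≤ b * (r * (1 + R) ^ (r - 1)) := by
          apply mul_le_mul_of_nonneg_left _ hb.le
          exact mul_le_mul_of_nonneg_left hkey (by linarith)
  calc ‖-(b * (r * |x| ^ (r - 2) * x))‖₊ ≤ (‖b * (r * (1 + R) ^ (r - 1))‖).toNNReal := by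
        rw [← Real.toNNReal_coe (r := ‖_‖₊), coe_nnnorm]
        exact Real.toNNReal_le_toNNReal (hbound.trans (le_abs_self _))
    _ = (b * (r * (1 + R) ^ (r - 1))).toNNReal := by
        rw [Real.norm_eq_abs, abs_of_nonneg (by positivity)]

set_option maxHeartbeats 2000000 in
/-- existence, uniqueness, monotonicity and bounds for the terminal
value problem y' = a - b|y|^r on [0,T], y(T) = -A, when b A^r > a. -/
theorem stmt_0 (a b r T A : ℝ) (ha : 0 < a) (hb : 0 < b) (hr : 1 < r)
    (hT : 0 < T) (hA : 0 < A) (hbA : a < b * A ^ r) :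
    ∃ y : ℝ → ℝ,
      ((∀ t ∈ Set.Icc (0:ℝ) T,
          HasDerivWithinAt y (a - b * |y t| ^ r) (Set.Icc (0:ℝ) T) t) ∧
        y T = -A ∧
        (∀ s ∈ Set.Icc (0:ℝ) T, ∀ t ∈ Set.Icc (0:ℝ) T, s ≤ t → y t ≤ y s) ∧
        (∀ t ∈ Set.Icc (0:ℝ) T, -A ≤ y t ∧ y t < -((a / b) ^ (1 / r)))) ∧
      (∀ z : ℝ → ℝ,
        (∀ t ∈ Set.Icc (0:ℝ) T,
          HasDerivWithinAt z (a - b * |z t| ^ r) (Set.Icc (0:ℝ) T) t) →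
        z T = -A → ∀ t ∈ Set.Icc (0:ℝ) T, z t = y t) := by
  have hr0 : (0:ℝ) < r := by linarith
  obtain ⟨c, hc_def⟩ : ∃ x : ℝ, x = (a / b) ^ (1 / r) := ⟨_, rfl⟩
  have hab : (0:ℝ) < a / b := div_pos ha hb
  have hc_pos : 0 < c := hc_def ▸ Real.rpow_pos_of_pos hab _
  have hcr : c ^ r = a / b := by
    rw [hc_def, ← Real.rpow_mul hab.le, one_div, inv_mul_cancel₀ hr0.ne', Real.rpow_one]
  have hbcr : b * c ^ r = a := by rw [hcr]; field_simp
  have hcA : c < A := by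
    by_contra h
    push_neg at h
    have : A ^ r ≤ c ^ r := Real.rpow_le_rpow hA.le h hr0.le
    rw [hcr] at this
    have : b * A ^ r ≤ a := by
      calc b * A ^ r ≤ b * (a / b) := by nlinarith
        _ = a := by field_simp
    linarith
  -- the vector field denominator is negative left of -c
  have key : ∀ w : ℝ, w < -c → a - b * (-w) ^ r < 0 := by
    intro w hw
    have h1 : c < -w := by linarith
    have h2 : c ^ r < (-w) ^ r := Real.rpow_lt_rpow hc_pos.le h1 hr0
    nlinarith
  obtain ⟨f, hf_def⟩ : ∃ f' : ℝ → ℝ, f' = fun w => (a - b * (-w) ^ r)⁻¹ := ⟨_, rfl⟩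
  have hfneg : ∀ w : ℝ, w < -c → f w < 0 := fun w hw => by
    rw [hf_def]; exact inv_lt_zero.mpr (key w hw)
  have hfcont : ContinuousOn f (Set.Iio (-c)) := by
    intro w hw
    apply ContinuousAt.continuousWithinAt
    rw [hf_def]
    have hd : ContinuousAt (fun w : ℝ => a - b * (-w) ^ r) w := by
      apply ContinuousAt.sub continuousAt_const
      apply ContinuousAt.mul continuousAt_const
      exact (Real.continuousAt_rpow_const (-w) r
        (Or.inl (by simp only [Set.mem_Iio] at hw; nlinarith [hc_pos]))).comp
        (continuous_neg.continuousAt)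
    exact hd.inv₀ (key w hw).ne
  have hIioOC : Set.OrdConnected (Set.Iio (-c)) := Set.ordConnected_Iio
  have hNA : (-A : ℝ) ∈ Set.Iio (-c) := by simp only [Set.mem_Iio]; linarith
  have hint : ∀ u₁ ∈ Set.Iio (-c), ∀ u₂ ∈ Set.Iio (-c),
      IntervalIntegrable f MeasureTheory.volume u₁ u₂ := by
    intro u₁ h1 u₂ h2
    exact (hfcont.mono (hIioOC.uIcc_subset h1 h2)).intervalIntegrable
  obtain ⟨F, hF_def⟩ : ∃ F' : ℝ → ℝ, F' = fun u => T + ∫ w in (-A:ℝ)..u, f w := ⟨_, rfl⟩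
  have hFderiv : ∀ u ∈ Set.Iio (-c), HasDerivAt F (f u) u := by
    intro u hu
    rw [hF_def]
    apply HasDerivAt.const_add
    exact intervalIntegral.integral_hasDerivAt_right (hint _ hNA _ hu)
      (hfcont.stronglyMeasurableAtFilter isOpen_Iio u hu)
      (hfcont.continuousAt (isOpen_Iio.mem_nhds hu))
  have hFcont : ContinuousOn F (Set.Iio (-c)) :=
    fun u hu => (hFderiv u hu).continuousAt.continuousWithinAt
  have hFanti : StrictAntiOn F (Set.Iio (-c)) := by
    apply strictAntiOn_of_deriv_neg (convex_Iio _) hFcont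
    intro u hu
    rw [interior_Iio] at hu
    rw [(hFderiv u hu).deriv]
    exact hfneg u hu
  have hFA : F (-A) = T := by rw [hF_def]; simp
  -- Lipschitz constant / MVT bound
  obtain ⟨M, hM_def⟩ : ∃ x : ℝ, x = b * (r * (1 + A) ^ (r - 1)) := ⟨_, rfl⟩
  have hM_pos : 0 < M := by
    rw [hM_def]
    have : (0:ℝ) < (1 + A) ^ (r - 1) := Real.rpow_pos_of_pos (by linarith) _
    positivity
  have hMVT : ∀ w ∈ Set.Icc (-A) (-c), b * ((-w) ^ r - c ^ r) ≤ M * (-w - c) := by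
    intro w hw
    have hlip := my_lip (a := a) hb hr A hA.le
    have hw1 : -w ∈ Metric.closedBall (0:ℝ) A := by
      rw [mem_closedBall_zero_iff, Real.norm_eq_abs, abs_of_nonneg (by
        have := hw.2; have := hc_pos; linarith)]
      linarith [hw.1]
    have hw2 : c ∈ Metric.closedBall (0:ℝ) A := by
      rw [mem_closedBall_zero_iff, Real.norm_eq_abs, abs_of_nonneg hc_pos.le]
      linarith
    rw [← hM_def] at hlip
    have hd := hlip.dist_le_mul (-w) hw1 c hw2
    rw [Real.coe_toNNReal _ (by positivity)] at hd
    have hwc : c ≤ -w := by linarith [hw.2]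
    have habs1 : |(-w)| = -w := abs_of_nonneg (by linarith [hc_pos])
    have habs2 : |c| = c := abs_of_nonneg hc_pos.le
    rw [Real.dist_eq, Real.dist_eq, habs1, habs2] at hd
    have hmono : c ^ r ≤ (-w) ^ r := Real.rpow_le_rpow hc_pos.le hwc hr0.le
    have h1 : |a - b * (-w) ^ r - (a - b * c ^ r)| = b * ((-w) ^ r - c ^ r) := by
      rw [abs_of_nonpos (by nlinarith)]
      ring
    have h2 : |(-w) - c| = -w - c := abs_of_nonneg (by linarith)
    rw [h1, h2] at hd
    exact hd
  -- choose u₀ with F u₀ < 0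
  obtain ⟨ε, hε_def⟩ : ∃ x : ℝ, x = min ((A - c) / 2) (Real.exp (Real.log (A - c) - M * T - M)) := ⟨_, rfl⟩
  have hε_pos : 0 < ε := hε_def ▸ lt_min (by linarith) (Real.exp_pos _)
  have hεAc : ε < A - c := hε_def ▸ lt_of_le_of_lt (min_le_left _ _) (by linarith)
  have hlogε : Real.log ε ≤ Real.log (A - c) - M * T - M := by
    calc Real.log ε ≤ Real.log (Real.exp (Real.log (A - c) - M * T - M)) := by
          apply Real.log_le_log hε_pos
          rw [hε_def]; exact min_le_right _ _
      _ = Real.log (A - c) - M * T - M := Real.log_exp _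
  obtain ⟨u₀, hu₀_def⟩ : ∃ x : ℝ, x = -c - ε := ⟨_, rfl⟩
  have hu₀mem : u₀ ∈ Set.Iio (-c) := by rw [Set.mem_Iio, hu₀_def]; linarith
  have hAu₀ : -A < u₀ := by rw [hu₀_def]; linarith
  -- the comparison function g and its antiderivative G
  obtain ⟨g, hg_def⟩ : ∃ g' : ℝ → ℝ, g' = fun w => -(M * (-w - c))⁻¹ := ⟨_, rfl⟩
  obtain ⟨G, hG_def⟩ : ∃ G' : ℝ → ℝ, G' = fun w => Real.log (-w - c) / M := ⟨_, rfl⟩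
  have hGderiv : ∀ w ∈ Set.Iio (-c), HasDerivAt G (g w) w := by
    intro w hw
    simp only [Set.mem_Iio] at hw
    have hwc : 0 < -w - c := by linarith
    have h1 : HasDerivAt (fun w : ℝ => -w - c) (-1) w := by
      simpa using (hasDerivAt_neg w).sub_const c
    have h2 : HasDerivAt (fun w : ℝ => Real.log (-w - c)) ((-w - c)⁻¹ * (-1)) w :=
      by have := (Real.hasDerivAt_log hwc.ne').comp w h1; exact this
    have h3 : HasDerivAt (fun x => Real.log (-x - c) / M) ((-w - c)⁻¹ * -1 / M) w := h2.div_const M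
    rw [hG_def, hg_def]
    convert h3 using 1
    beta_reduce
    rw [mul_inv]
    ring
  have hgcont : ContinuousOn g (Set.Iio (-c)) := by
    intro w hw
    simp only [Set.mem_Iio] at hw
    apply ContinuousAt.continuousWithinAt
    rw [hg_def]
    apply ContinuousAt.neg
    apply ContinuousAt.inv₀ (by fun_prop)
    have : 0 < -w - c := by linarith
    positivity
  have hIccsub : Set.Icc (-A) u₀ ⊆ Set.Iio (-c) := fun w hw => by
    rw [Set.mem_Iio]; have h2 := hw.2; rw [hu₀_def] at h2; linarith
  have h_fg : ∀ w ∈ Set.Icc (-A) u₀, f w ≤ g w := by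
    intro w hw
    have hwc : w < -c := hIccsub hw
    have hD_pos : 0 < b * ((-w) ^ r - c ^ r) := by
      have := key w hwc; nlinarith
    have hDM : b * ((-w) ^ r - c ^ r) ≤ M * (-w - c) :=
      hMVT w ⟨hw.1, by linarith⟩
    have hfval : f w = -(b * ((-w) ^ r - c ^ r))⁻¹ := by
      rw [hf_def]
      beta_reduce
      rw [← inv_neg]
      congr 1
      nlinarith
    rw [hfval, hg_def]
    simp only [neg_le_neg_iff]
    exact inv_anti₀ hD_pos hDM
  have hFu₀ : F u₀ < 0 := by
    have hle : (∫ w in (-A:ℝ)..u₀, f w) ≤ ∫ w in (-A:ℝ)..u₀, g w := by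
      apply intervalIntegral.integral_mono_on hAu₀.le
        (hint _ hNA _ hu₀mem)
        ((hgcont.mono hIccsub).intervalIntegrable_of_Icc hAu₀.le)
        h_fg
    have heq : (∫ w in (-A:ℝ)..u₀, g w) = G u₀ - G (-A) := by
      apply intervalIntegral.integral_eq_sub_of_hasDerivAt
      · intro x hx
        rw [Set.uIcc_of_le hAu₀.le] at hx
        exact hGderiv x (hIccsub hx)
      · exact (hgcont.mono hIccsub).intervalIntegrable_of_Icc hAu₀.le
    have hGu₀ : G u₀ = Real.log ε / M := by
      rw [hG_def, hu₀_def]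
      norm_num
    have hGA : G (-A) = Real.log (A - c) / M := by
      rw [hG_def]
      norm_num
    have hdiv : (Real.log ε - Real.log (A - c)) / M ≤ -T - 1 := by
      rw [div_le_iff₀ hM_pos]
      have h' : (-T - 1) * M = -(M * T) - M := by ring
      rw [h']
      linarith [hlogε]
    have : F u₀ ≤ T + (Real.log ε - Real.log (A - c)) / M := by
      rw [hF_def]
      simp only
      rw [sub_div]
      have := heq ▸ hle
      rw [hGu₀, hGA] at this
      linarith [this]
    linarith [hdiv]
  obtain ⟨u₁, hu₁_def⟩ : ∃ x : ℝ, x = -A - 1 := ⟨_, rfl⟩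
  have hu₁mem : u₁ ∈ Set.Iio (-c) := by rw [Set.mem_Iio, hu₁_def]; linarith
  have hu₁A : u₁ < -A := by rw [hu₁_def]; linarith
  have hFu₁ : T < F u₁ := by
    have hpos : 0 < ∫ w in u₁..(-A:ℝ), -f w := by
      apply intervalIntegral.intervalIntegral_pos_of_pos_on
      · exact (hint _ hu₁mem _ hNA).neg
      · intro x hx
        have hxm : x < -c := by
          have := hx.2; simp only [Set.mem_Iio] at hNA; linarith
        simpa using (hfneg x hxm)
      · exact hu₁A
    rw [intervalIntegral.integral_neg] at hpos
    have h2 : (∫ w in (-A:ℝ)..u₁, f w) = -∫ w in u₁..(-A:ℝ), f w :=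
      (intervalIntegral.integral_symm _ _)
    rw [hF_def]
    simp only
    rw [h2]
    linarith
  -- the interval J = [u₁, u₀] and the inverse function y
  have hu₁u₀ : u₁ < u₀ := by rw [hu₁_def]; linarith
  have hJsub : Set.Icc u₁ u₀ ⊆ Set.Iio (-c) := fun w hw =>
    lt_of_le_of_lt hw.2 hu₀mem
  have hNAJ : (-A : ℝ) ∈ Set.Icc u₁ u₀ := ⟨by rw [hu₁_def]; linarith, hAu₀.le⟩
  have hu₁J : u₁ ∈ Set.Icc u₁ u₀ := ⟨le_refl _, hu₁u₀.le⟩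
  have hu₀J : u₀ ∈ Set.Icc u₁ u₀ := ⟨hu₁u₀.le, le_refl _⟩
  have hFantiJ : StrictAntiOn F (Set.Icc u₁ u₀) := fun x hx y hy hxy =>
    hFanti (hJsub hx) (hJsub hy) hxy
  have hFanti' : AntitoneOn F (Set.Icc u₁ u₀) := hFantiJ.antitoneOn
  have hinj : Set.InjOn F (Set.Icc u₁ u₀) := hFantiJ.injOn
  have hIVT : Set.Icc (F u₀) (F u₁) ⊆ F '' Set.Icc u₁ u₀ :=
    intermediate_value_Icc' hu₁u₀.le (hFcont.mono hJsub)
  have hFmemS : ∀ u ∈ Set.Icc u₁ u₀, F u ∈ Set.Icc (F u₀) (F u₁) := fun u hu =>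
    ⟨hFanti' hu hu₀J hu.2, hFanti' hu₁J hu hu.1⟩
  classical
  obtain ⟨y, hy_def⟩ : ∃ y' : ℝ → ℝ,
      y' = fun t => if h : ∃ u, u ∈ Set.Icc u₁ u₀ ∧ F u = t then h.choose else 0 := ⟨_, rfl⟩
  have hy : ∀ t ∈ Set.Icc (F u₀) (F u₁), y t ∈ Set.Icc u₁ u₀ ∧ F (y t) = t := by
    intro t ht
    have hex : ∃ u, u ∈ Set.Icc u₁ u₀ ∧ F u = t := by
      obtain ⟨u, hu, hFu⟩ := hIVT ht
      exact ⟨u, hu, hFu⟩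
    rw [hy_def]
    beta_reduce
    rw [dif_pos hex]
    exact hex.choose_spec
  have hyF : ∀ u ∈ Set.Icc u₁ u₀, y (F u) = u := by
    intro u hu
    obtain ⟨h1, h2⟩ := hy _ (hFmemS u hu)
    exact hinj h1 hu h2
  have hyT : y T = -A := by rw [← hFA]; exact hyF _ hNAJ
  have hsubS : Set.Icc (0:ℝ) T ⊆ Set.Icc (F u₀) (F u₁) := fun t ht =>
    ⟨le_trans (by linarith) ht.1, le_trans ht.2 hFu₁.le⟩
  have hanti : ∀ s ∈ Set.Icc (F u₀) (F u₁), ∀ t ∈ Set.Icc (F u₀) (F u₁),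
      s ≤ t → y t ≤ y s := by
    intro s hs t ht hst
    by_contra h
    push_neg at h
    have := hFantiJ (hy s hs).1 (hy t ht).1 h
    rw [(hy s hs).2, (hy t ht).2] at this
    linarith
  have hstrict : ∀ s ∈ Set.Icc (F u₀) (F u₁), ∀ t ∈ Set.Icc (F u₀) (F u₁),
      s < t → y t < y s := by
    intro s hs t ht hst
    have hle := hanti s hs t ht hst.le
    rcases eq_or_lt_of_le hle with he | h
    · exfalso
      have : F (y t) = F (y s) := by rw [he]
      rw [(hy s hs).2, (hy t ht).2] at this
      linarith
    · exact h
  have hyIoo : ∀ t ∈ Set.Icc (0:ℝ) T, y t ∈ Set.Ioo u₁ u₀ := by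
    intro t ht
    have htS := hsubS ht
    obtain ⟨hJ, hFy⟩ := hy t htS
    constructor
    · rcases eq_or_lt_of_le hJ.1 with he | h
      · exfalso
        rw [← he] at hFy
        rw [hFy] at hFu₁
        exact absurd ht.2 (by linarith)
      · exact h
    · rcases eq_or_lt_of_le hJ.2 with he | h
      · exfalso
        rw [he] at hFy
        rw [hFy] at hFu₀
        exact absurd ht.1 (by linarith)
      · exact h
  have hycont : ∀ t ∈ Set.Icc (0:ℝ) T, ContinuousAt y t := by
    intro t ht
    have hSnhds : Set.Icc (F u₀) (F u₁) ∈ nhds t :=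
      Icc_mem_nhds (by linarith [ht.1]) (by linarith [ht.2])
    have hmono : StrictMonoOn (fun s => -(y s)) (Set.Icc (F u₀) (F u₁)) := by
      intro s hs t' ht' hst
      simp only [neg_lt_neg_iff]
      exact hstrict s hs t' ht' hst
    have himg : (fun s => -(y s)) '' Set.Icc (F u₀) (F u₁) ∈ nhds (-(y t)) := by
      apply Filter.mem_of_superset (Icc_mem_nhds (a := -u₀) (b := -u₁) _ _)
      · intro x hx
        refine ⟨F (-x), hFmemS _ ⟨by linarith [hx.2], by linarith [hx.1]⟩, ?_⟩
        show -(y (F (-x))) = x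
        rw [hyF _ ⟨by linarith [hx.2], by linarith [hx.1]⟩]
        ring
      · have := (hyIoo t ht).2; linarith
      · have := (hyIoo t ht).1; linarith
    have hcontneg : ContinuousAt (fun s => -(y s)) t :=
      hmono.continuousAt_of_image_mem_nhds hSnhds himg
    have : ContinuousAt (fun s => -(-(y s))) t := hcontneg.neg
    simpa [neg_neg] using this
  have hyneg : ∀ t ∈ Set.Icc (0:ℝ) T, y t < -c := fun t ht =>
    lt_of_lt_of_le (hyIoo t ht).2 hu₀mem.le
  have hyderiv : ∀ t ∈ Set.Icc (0:ℝ) T,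
      HasDerivAt y (a - b * |y t| ^ r) t := by
    intro t ht
    have hytJ : y t ∈ Set.Iio (-c) := hyneg t ht
    have hFd : HasDerivAt F (f (y t)) (y t) := hFderiv _ hytJ
    have hne : f (y t) ≠ 0 := (hfneg _ hytJ).ne
    have hev : ∀ᶠ x in nhds t, F (y x) = x := by
      have hOnhds : Set.Ioo (F u₀) (F u₁) ∈ nhds t :=
        Ioo_mem_nhds (by linarith [ht.1]) (by linarith [ht.2])
      filter_upwards [hOnhds] with x hx
      exact (hy x (Set.Ioo_subset_Icc_self hx)).2
    have hyd : HasDerivAt y (f (y t))⁻¹ t :=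
      HasDerivAt.of_local_left_inverse (hycont t ht) hFd hne hev
    have hval : (f (y t))⁻¹ = a - b * |y t| ^ r := by
      rw [hf_def]
      beta_reduce
      rw [inv_inv, abs_of_neg (by
        have := hyneg t ht
        linarith [hc_pos] : y t < 0)]
    rw [← hval]
    exact hyd
  -- assemble the result
  refine ⟨y, ⟨fun t ht => (hyderiv t ht).hasDerivWithinAt, hyT, ?_, ?_⟩, ?_⟩
  · intro s hs t ht hst
    exact hanti s (hsubS hs) t (hsubS ht) hst
  · intro t ht
    constructor
    · have := hanti t (hsubS ht) T (hsubS ⟨hT.le, le_refl _⟩) ht.2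
      rw [hyT] at this
      exact this
    · rw [← hc_def]
      exact hyneg t ht
  · -- uniqueness
    intro z hz hzT
    have hzcont : ContinuousOn z (Set.Icc 0 T) := fun t ht =>
      (hz t ht).continuousWithinAt
    have hycontOn : ContinuousOn y (Set.Icc 0 T) := fun t ht =>
      (hycont t ht).continuousWithinAt
    obtain ⟨C₁, hC₁⟩ := isCompact_Icc.exists_bound_of_continuousOn hycontOn
    obtain ⟨C₂, hC₂⟩ := isCompact_Icc.exists_bound_of_continuousOn hzcont
    have hR0 : (0:ℝ) ≤ max C₁ C₂ :=
      le_trans (norm_nonneg (y T)) ((hC₁ T ⟨hT.le, le_refl _⟩).trans (le_max_left _ _))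
    have hderivIic : ∀ (w : ℝ → ℝ),
        (∀ t ∈ Set.Icc (0:ℝ) T,
          HasDerivWithinAt w (a - b * |w t| ^ r) (Set.Icc (0:ℝ) T) t) →
        ∀ t ∈ Set.Ioc (0:ℝ) T,
          HasDerivWithinAt w (a - b * |w t| ^ r) (Set.Iic t) t := by
      intro w hw t ht
      apply (hw t ⟨ht.1.le, ht.2⟩).mono_of_mem_nhdsWithin
      rw [mem_nhdsWithin]
      refine ⟨Set.Ioi 0, isOpen_Ioi, ht.1, ?_⟩
      intro x hx
      exact ⟨hx.1.le, le_trans hx.2 ht.2⟩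
    have heqon : Set.EqOn z y (Set.Icc 0 T) := by
      apply ODE_solution_unique_of_mem_Icc_left
        (v := fun _ x => a - b * |x| ^ r)
        (s := fun _ => Metric.closedBall (0:ℝ) (max C₁ C₂))
        (K := (b * (r * (1 + max C₁ C₂) ^ (r - 1))).toNNReal)
        (fun _ _ => my_lip (a := a) hb hr _ hR0)
        hzcont (hderivIic z hz)
        (fun t ht => mem_closedBall_zero_iff.2
          ((hC₂ t ⟨ht.1.le, ht.2⟩).trans (le_max_right _ _)))
        hycontOn (hderivIic y (fun t ht => (hyderiv t ht).hasDerivWithinAt))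
        (fun t ht => mem_closedBall_zero_iff.2
          ((hC₁ t ⟨ht.1.le, ht.2⟩).trans (le_max_left _ _)))
        (by rw [hzT, hyT])
    exact fun t ht => heqon ht
end

section
/- Let a, b > 0, r > 1, T > 0, A > (a/b)^{1/r}, and let F(ξ) = ∫_{−A}^{ξ} du/(b|u|^r − a), a strictly increasing bijection from [−A, −(a/b)^{1/r}) onto [0,∞). Then the function y(t) := F^{−1}(T − t) is differentiable on [0,T] and is the solution of the terminal value problem: y'(t) = a − b|y(t)|^r for all t ∈ [0,T] and y(T) = −A. -/
open Set intervalIntegral MeasureTheory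

/-- The function F(ξ) = ∫_{-A}^{ξ} du/(b|u|^r - a). -/
noncomputable def Ffun (a b r A : ℝ) (ξ : ℝ) : ℝ :=
  ∫ u in (-A)..ξ, 1 / (b * |u| ^ r - a)

/-- y(t) = F⁻¹(T - t), where F⁻¹ is the inverse of F on [-A, -(a/b)^(1/r)). -/
noncomputable def ysol (a b r A T : ℝ) (t : ℝ) : ℝ :=
  Function.invFunOn (Ffun a b r A) (Set.Ico (-A) (-((a / b) ^ (1 / r)))) (T - t)

section aux

variable {a b r A c : ℝ}

lemma aux_pos (hb : 0 < b) (hc0 : 0 < c) (hcr : c ^ r = a / b) (hr : 1 < r) :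
    ∀ u : ℝ, u < -c → 0 < b * |u| ^ r - a := by
  intro u hu
  have h1 : c < |u| := by
    rw [abs_of_neg (by linarith : u < 0)]; linarith
  have h2 : c ^ r < |u| ^ r := Real.rpow_lt_rpow hc0.le h1 (by linarith)
  rw [hcr] at h2
  have := (div_lt_iff₀ hb).mp h2
  nlinarith

lemma aux_contAt (hb : 0 < b) (hc0 : 0 < c) (hcr : c ^ r = a / b) (hr : 1 < r) :
    ∀ u : ℝ, u < -c → ContinuousAt (fun u : ℝ => 1 / (b * |u| ^ r - a)) u := by
  intro u hu
  have habs : ContinuousAt (fun u : ℝ => |u| ^ r) u :=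
    (Real.continuousAt_rpow_const _ _ (Or.inr (by linarith))).comp continuous_abs.continuousAt
  exact continuousAt_const.div ((habs.const_mul b).sub continuousAt_const)
    (ne_of_gt (aux_pos hb hc0 hcr hr u hu))

lemma aux_int (hb : 0 < b) (hc0 : 0 < c) (hcr : c ^ r = a / b) (hr : 1 < r)
    {x y : ℝ} (hx : x < -c) (hy : y < -c) :
    IntervalIntegrable (fun u : ℝ => 1 / (b * |u| ^ r - a)) volume x y := by
  apply ContinuousOn.intervalIntegrable
  intro u hu
  have hu' : u < -c := lt_of_le_of_lt hu.2 (max_lt hx hy)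
  exact (aux_contAt hb hc0 hcr hr u hu').continuousWithinAt

lemma aux_deriv (hb : 0 < b) (hc0 : 0 < c) (hcr : c ^ r = a / b) (hr : 1 < r)
    (hcA : c < A) {ξ : ℝ} (hξ : ξ < -c) :
    HasDerivAt (Ffun a b r A) (1 / (b * |ξ| ^ r - a)) ξ := by
  exact intervalIntegral.integral_hasDerivAt_right
    (aux_int hb hc0 hcr hr (by linarith) hξ)
    (ContinuousAt.stronglyMeasurableAtFilter isOpen_Iio
      (fun u hu => aux_contAt hb hc0 hcr hr u hu) ξ hξ)
    (aux_contAt hb hc0 hcr hr ξ hξ)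

lemma aux_mono (hb : 0 < b) (hc0 : 0 < c) (hcr : c ^ r = a / b) (hr : 1 < r)
    (hcA : c < A) : StrictMonoOn (Ffun a b r A) (Iio (-c)) := by
  apply strictMonoOn_of_deriv_pos (convex_Iio _)
  · exact fun u hu => (aux_deriv hb hc0 hcr hr hcA hu).continuousAt.continuousWithinAt
  · intro u hu
    rw [interior_Iio] at hu
    rw [(aux_deriv hb hc0 hcr hr hcA hu).deriv]
    exact one_div_pos.mpr (aux_pos hb hc0 hcr hr u hu)

end aux

section aux2

variable {a b r A c : ℝ}

lemma aux_key (hb : 0 < b) (hc0 : 0 < c) (hcr : c ^ r = a / b) (hr : 1 < r)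
    {x : ℝ} (hcx : c < x) (hxA : x ≤ A) :
    b * x ^ r - a ≤ (b * r * A ^ (r - 1)) * (x - c) := by
  have hx0 : 0 < x := lt_trans hc0 hcx
  have hs : -1 ≤ (c - x) / x := by
    rw [le_div_iff₀ hx0]; linarith
  have hb1 := one_add_mul_self_le_rpow_one_add hs hr.le
  have h2 : 1 + (c - x) / x = c / x := by field_simp; ring
  have h3 : (c / x) ^ r = c ^ r / x ^ r := Real.div_rpow hc0.le hx0.le r
  rw [h2, h3] at hb1
  have hxr : (0:ℝ) < x ^ r := Real.rpow_pos_of_pos hx0 r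
  have hxr1 : x ^ (r - 1) = x ^ r / x := Real.rpow_sub_one (ne_of_gt hx0) r
  have key : x ^ r + r * x ^ (r - 1) * (c - x) ≤ c ^ r := by
    have h4 := mul_le_mul_of_nonneg_right hb1 hxr.le
    have h5 : (1 + r * ((c - x) / x)) * x ^ r
        = x ^ r + r * (x ^ r / x) * (c - x) := by field_simp
    have h6 : c ^ r / x ^ r * x ^ r = c ^ r := by field_simp
    rw [h5, h6] at h4
    rw [hxr1]; linarith
  have hA1 : x ^ (r - 1) ≤ A ^ (r - 1) := Real.rpow_le_rpow hx0.le hxA (by linarith)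
  have hxr1pos : (0:ℝ) < x ^ (r - 1) := Real.rpow_pos_of_pos hx0 _
  have hacb : a = b * c ^ r := by rw [hcr]; field_simp
  nlinarith [mul_le_mul_of_nonneg_left hA1 (by nlinarith : (0:ℝ) ≤ r * (x - c))]

lemma aux_lower (hb : 0 < b) (hc0 : 0 < c) (hcr : c ^ r = a / b) (hr : 1 < r)
    {u : ℝ} (h1 : -A ≤ u) (h2 : u < -c) :
    1 / ((b * r * A ^ (r - 1)) * (-u - c)) ≤ 1 / (b * |u| ^ r - a) := by
  have habs : |u| = -u := abs_of_neg (by linarith)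
  have := aux_key hb hc0 hcr hr (show c < -u by linarith) (show -u ≤ A by linarith)
  have hp := aux_pos hb hc0 hcr hr u h2
  rw [habs] at hp ⊢
  exact one_div_le_one_div_of_le hp (by linarith)

lemma aux_surj (hb : 0 < b) (hc0 : 0 < c) (hcr : c ^ r = a / b) (hr : 1 < r)
    (hcA : c < A) :
    ∀ s : ℝ, 0 ≤ s → ∃ ξ ∈ Ico (-A) (-c), Ffun a b r A ξ = s := by
  intro s hs
  have hA0 : 0 < A := lt_trans hc0 hcA
  set K : ℝ := b * r * A ^ (r - 1) with hK
  have hK0 : 0 < K := by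
    have := Real.rpow_pos_of_pos hA0 (r - 1); positivity
  set ε : ℝ := (A - c) * Real.exp (-(K * (s + 1))) with hε
  have hε0 : 0 < ε := mul_pos (by linarith) (Real.exp_pos _)
  have hεlt : ε < A - c := by
    have h1 : Real.exp (-(K * (s + 1))) < 1 := by
      apply Real.exp_lt_one_iff.mpr; nlinarith
    nlinarith
  set ξ' : ℝ := -c - ε with hξ'
  have hξ'1 : -A < ξ' := by simp only [hξ']; linarith
  have hξ'2 : ξ' < -c := by simp only [hξ']; linarith
  have hAc : -A < -c := by linarith
  -- the comparison integrand
  have hint1 : IntervalIntegrable (fun u : ℝ => 1 / (K * (-u - c))) volume (-A) ξ' := by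
    apply ContinuousOn.intervalIntegrable
    intro u hu
    have hu' : u < -c := lt_of_le_of_lt hu.2 (max_lt hAc hξ'2)
    have hden : -u - c > 0 := by linarith
    exact (continuousAt_const.div
      (((continuous_neg.sub continuous_const).continuousAt).const_mul K)
      (by positivity)).continuousWithinAt
  have hint2 : IntervalIntegrable (fun u : ℝ => 1 / (b * |u| ^ r - a)) volume (-A) ξ' :=
    aux_int hb hc0 hcr hr hAc hξ'2
  have hcmp : (∫ u in (-A)..ξ', 1 / (K * (-u - c))) ≤ Ffun a b r A ξ' := by
    apply intervalIntegral.integral_mono_on (by linarith) hint1 hint2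
    intro u hu
    exact aux_lower hb hc0 hcr hr hu.1 (lt_of_le_of_lt hu.2 hξ'2)
  have hval : (∫ u in (-A)..ξ', 1 / (K * (-u - c))) = s + 1 := by
    have hφ : ∀ u ∈ uIcc (-A) ξ',
        HasDerivAt (fun u : ℝ => -(1 / K) * Real.log (-u - c)) (1 / (K * (-u - c))) u := by
      intro u hu
      rw [uIcc_of_le (by linarith : -A ≤ ξ')] at hu
      have hu' : u < -c := lt_of_le_of_lt hu.2 hξ'2
      have h0 : (0:ℝ) < -u - c := by linarith
      have h1 : HasDerivAt (fun u : ℝ => -u - c) (-1) u := (hasDerivAt_id u).neg.sub_const c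
      have h2 := (h1.log (ne_of_gt h0)).const_mul (-(1 / K))
      rw [show 1 / (K * (-u - c)) = -(1 / K) * (-1 / (-u - c)) by
        rw [neg_div, neg_mul, mul_neg, neg_neg, one_div_mul_one_div]]
      exact h2
    rw [intervalIntegral.integral_eq_sub_of_hasDerivAt hφ hint1]
    have he1 : -ξ' - c = ε := by simp only [hξ']; ring
    have he2 : -(-A) - c = A - c := by ring
    rw [he1, he2, hε, Real.log_mul (by linarith) (ne_of_gt (Real.exp_pos _)), Real.log_exp]
    field_simp
    ring
  have hF0 : Ffun a b r A (-A) = 0 := intervalIntegral.integral_same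
  have hcont : ContinuousOn (Ffun a b r A) (Icc (-A) ξ') := fun u hu =>
    (aux_deriv hb hc0 hcr hr hcA (lt_of_le_of_lt hu.2 hξ'2)).continuousAt.continuousWithinAt
  have hmem : s ∈ Icc (Ffun a b r A (-A)) (Ffun a b r A ξ') := by
    constructor
    · rw [hF0]; exact hs
    · linarith
  obtain ⟨ξ, hξmem, hFξ⟩ := intermediate_value_Icc (by linarith : -A ≤ ξ') hcont hmem
  exact ⟨ξ, ⟨hξmem.1, lt_of_le_of_lt hξmem.2 hξ'2⟩, hFξ⟩

end aux2

/-- y(t) := F⁻¹(T - t) is differentiable on [0,T] and solves the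
terminal value problem y' = a - b|y|^r, y(T) = -A. -/
theorem stmt_2 (a b r T A : ℝ) (ha : 0 < a) (hb : 0 < b) (hr : 1 < r)
    (hT : 0 < T) (hA : (a / b) ^ (1 / r) < A) :
    (∀ t ∈ Set.Icc (0:ℝ) T,
        HasDerivWithinAt (ysol a b r A T)
          (a - b * |ysol a b r A T t| ^ r) (Set.Icc (0:ℝ) T) t) ∧
    ysol a b r A T T = -A := by
  set c : ℝ := (a / b) ^ (1 / r) with hcdef
  have hc0 : 0 < c := Real.rpow_pos_of_pos (div_pos ha hb) _
  have hr0 : r ≠ 0 := by linarith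
  have hcr : c ^ r = a / b := by
    rw [hcdef, ← Real.rpow_mul (div_pos ha hb).le, one_div, inv_mul_cancel₀ hr0, Real.rpow_one]
  have hcA : c < A := hA
  set B : ℝ := A + 1 with hBdef
  have hB1 : -B < -A := by rw [hBdef]; linarith
  have hAc : -A < -c := by linarith
  have hBc : -B < -c := by linarith
  set F := Ffun a b r A with hFdef
  have hF0 : F (-A) = 0 := intervalIntegral.integral_same
  have hmono := aux_mono hb hc0 hcr hr hcA
  have hinj := hmono.injOn
  have hsurj := aux_surj hb hc0 hcr hr hcA
  have hFB0 : F (-B) < 0 := by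
    rw [← hF0]
    exact hmono (show -B ∈ Iio (-c) from hBc) (show -A ∈ Iio (-c) from hAc) hB1
  have hsurj2 : ∀ s : ℝ, F (-B) < s → ∃ ξ ∈ Ioo (-B) (-c), F ξ = s := by
    intro s hsB
    rcases le_or_gt 0 s with hs | hs
    · obtain ⟨ξ, hξ, hFξ⟩ := hsurj s hs
      exact ⟨ξ, ⟨lt_of_lt_of_le hB1 hξ.1, hξ.2⟩, hFξ⟩
    · have hcont : ContinuousOn F (Icc (-B) (-A)) := fun u hu =>
        (aux_deriv hb hc0 hcr hr hcA (lt_of_le_of_lt hu.2 hAc)).continuousAt.continuousWithinAt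
      obtain ⟨ξ, hξmem, hFξ⟩ := intermediate_value_Icc hB1.le hcont
        ⟨hsB.le, by rw [hF0]; exact hs.le⟩
      refine ⟨ξ, ⟨?_, lt_of_le_of_lt hξmem.2 hAc⟩, hFξ⟩
      rcases eq_or_lt_of_le hξmem.1 with h | h
      · exfalso; rw [← h] at hFξ; linarith
      · exact h
  set w : ℝ → ℝ := Function.invFunOn F (Ioo (-B) (-c)) with hwdef
  have hIooIio : Ioo (-B) (-c) ⊆ Iio (-c) := fun x hx => hx.2
  have hw : ∀ s : ℝ, F (-B) < s → w s ∈ Ioo (-B) (-c) ∧ F (w s) = s := by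
    intro s hsB
    obtain ⟨ξ, hξ, hFξ⟩ := hsurj2 s hsB
    exact ⟨Function.invFunOn_mem ⟨ξ, hξ, hFξ⟩, Function.invFunOn_eq ⟨ξ, hξ, hFξ⟩⟩
  have hwuniq : ∀ s ξ, F (-B) < s → ξ ∈ Ioo (-B) (-c) → F ξ = s → w s = ξ := by
    intro s ξ hsB hξ hFξ
    have h1 := hw s hsB
    exact hinj (hIooIio h1.1) (hIooIio hξ) (h1.2.trans hFξ.symm)
  have hwmono : MonotoneOn w (Ioi (F (-B))) := by
    intro x hx y hy hxy
    by_contra hlt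
    push_neg at hlt
    have h1 := hw x hx
    have h2 := hw y hy
    have h3 : F (w y) < F (w x) := hmono (hIooIio h2.1) (hIooIio h1.1) hlt
    rw [h1.2, h2.2] at h3
    linarith
  have hwcont : ∀ s : ℝ, F (-B) < s → ContinuousAt w s := by
    intro s hsB
    apply continuousAt_of_monotoneOn_of_image_mem_nhds hwmono (Ioi_mem_nhds hsB)
    have himg : Ioo (-B) (-c) ⊆ w '' Ioi (F (-B)) := by
      intro ξ hξ
      have hFξB : F (-B) < F ξ := hmono hBc (hIooIio hξ) hξ.1
      exact ⟨F ξ, hFξB, hwuniq _ _ hFξB hξ rfl⟩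
    exact Filter.mem_of_superset (isOpen_Ioo.mem_nhds (hw s hsB).1) himg
  have hy_eq : ∀ t : ℝ, 0 ≤ T - t → ysol a b r A T t = w (T - t) := by
    intro t hts
    obtain ⟨ξ, hξ, hFξ⟩ := hsurj (T - t) hts
    have hξIio : ξ ∈ Iio (-c) := hξ.2
    have h1 : ysol a b r A T t = ξ := by
      have hex : ∃ x ∈ Ico (-A) (-c), F x = T - t := ⟨ξ, hξ, hFξ⟩
      have hmem := Function.invFunOn_mem hex
      have heq := Function.invFunOn_eq hex
      show Function.invFunOn F (Ico (-A) (-c)) (T - t) = ξ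
      exact hinj hmem.2 hξIio (heq.trans hFξ.symm)
    have h2 : w (T - t) = ξ := hwuniq _ _ (by linarith) ⟨lt_of_lt_of_le hB1 hξ.1, hξ.2⟩ hFξ
    rw [h1, h2]
  constructor
  · intro t ht
    have hts : 0 ≤ T - t := by linarith [ht.2]
    have hsB : F (-B) < T - t := by linarith
    obtain ⟨hwmem, hwF⟩ := hw (T - t) hsB
    have hFd := aux_deriv hb hc0 hcr hr hcA hwmem.2
    have hgpos := aux_pos hb hc0 hcr hr _ hwmem.2
    have hfg : ∀ᶠ x in nhds (T - t), F (w x) = x := by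
      filter_upwards [Ioi_mem_nhds hsB] with x hx
      exact (hw x hx).2
    have hw' : HasDerivAt w (1 / (b * |w (T - t)| ^ r - a))⁻¹ (T - t) :=
      HasDerivAt.of_local_left_inverse (hwcont _ hsB) hFd (by positivity) hfg
    have hcomp : HasDerivAt (fun t : ℝ => w (T - t)) (-(1 / (b * |w (T - t)| ^ r - a))⁻¹) t := by
      have h1 : HasDerivAt (fun t : ℝ => T - t) (-1) t := (hasDerivAt_id t).const_sub T
      have h2 := hw'.comp t h1
      rw [show -(1 / (b * |w (T - t)| ^ r - a))⁻¹ = (1 / (b * |w (T - t)| ^ r - a))⁻¹ * -1 by ring]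
      exact h2
    have hval : -(1 / (b * |w (T - t)| ^ r - a))⁻¹ = a - b * |ysol a b r A T t| ^ r := by
      rw [hy_eq t hts, one_div, inv_inv]
      ring
    rw [← hval]
    exact (hcomp.hasDerivWithinAt).congr
      (fun u hu => hy_eq u (by linarith [hu.2])) (hy_eq t hts)
  · rw [hy_eq T (by linarith)]
    exact hwuniq _ _ (by rw [sub_self]; exact hFB0) ⟨by linarith, hAc⟩
      (by rw [sub_self]; exact hF0)
end

section
/- Let a, b > 0, r > 1, T > 0, A > (a/b)^{1/r}, and let y be the unique solution of the terminal value problem y'(t) = a − b|y(t)|^r on [0,T], y(T) = −A. Then for every t ∈ [0,T], |y(t)| ≥ (A^{1−r} + b(r−1)(T−t))^{1/(1−r)}, equivalently |y(t)|^{1−r} ≤ A^{1−r} + b(r−1)(T−t). -/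
open Set Filter Topology

/-- lower bound on |y| for the solution of the terminal value
problem y' = a - b|y|^r, y(T) = -A. -/
theorem stmt_4 (a b r T A : ℝ) (ha : 0 < a) (hb : 0 < b) (hr : 1 < r)
    (hT : 0 < T) (hA : (a / b) ^ (1 / r) < A)
    (y : ℝ → ℝ)
    (hy : ∀ t ∈ Set.Icc (0:ℝ) T,
      HasDerivWithinAt y (a - b * |y t| ^ r) (Set.Icc (0:ℝ) T) t)
    (hyT : y T = -A) :
    ∀ t ∈ Set.Icc (0:ℝ) T,
      (A ^ (1 - r) + b * (r - 1) * (T - t)) ^ (1 / (1 - r)) ≤ |y t| ∧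
      |y t| ^ (1 - r) ≤ A ^ (1 - r) + b * (r - 1) * (T - t) := by
  have hr1 : (0:ℝ) < r - 1 := by linarith
  have hA0 : 0 < A := (Real.rpow_pos_of_pos (div_pos ha hb) _).trans hA
  have hyTneg : y T < 0 := by rw [hyT]; linarith
  have hcont : ContinuousOn y (Set.Icc 0 T) := fun t ht => (hy t ht).continuousWithinAt
  -- Step 1: y is negative on [0, T].
  have hneg : ∀ t ∈ Set.Icc (0:ℝ) T, y t < 0 := by
    by_contra hcon
    push_neg at hcon
    obtain ⟨t₀, ht₀, hy0⟩ := hcon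
    have hsub : Set.Icc t₀ T ⊆ Set.Icc 0 T := Set.Icc_subset_Icc ht₀.1 le_rfl
    set S := Set.Icc t₀ T ∩ y ⁻¹' {0} with hSdef
    have hScl : IsClosed S :=
      (hcont.mono hsub).preimage_isClosed_of_isClosed isClosed_Icc isClosed_singleton
    have hSne : S.Nonempty := by
      obtain ⟨c, hc, hc0⟩ := intermediate_value_Icc' ht₀.2 (hcont.mono hsub)
        (⟨hyTneg.le, hy0⟩ : (0:ℝ) ∈ Set.Icc (y T) (y t₀))
      exact ⟨c, hc, hc0⟩
    have hSbdd : BddAbove S := ⟨T, fun x hx => hx.1.2⟩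
    set τ := sSup S with hτdef
    have hτS : τ ∈ S := hScl.csSup_mem hSne hSbdd
    have hτ0 : y τ = 0 := hτS.2
    have hτT : τ < T := lt_of_le_of_ne hτS.1.2 (by
      intro h; rw [h] at hτ0; linarith)
    have hτIcc : τ ∈ Set.Icc (0:ℝ) T := ⟨le_trans ht₀.1 hτS.1.1, hτS.1.2⟩
    -- y is negative on (τ, T]
    have hiu : ∀ u ∈ Set.Ioc τ T, y u < 0 := by
      intro u hu
      have hne : y u ≠ 0 := by
        intro h0
        have : u ∈ S := ⟨⟨le_trans hτS.1.1 hu.1.le, hu.2⟩, h0⟩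
        exact absurd (le_csSup hSbdd this) (not_le.mpr hu.1)
      rcases lt_trichotomy (y u) 0 with h | h | h
      · exact h
      · exact absurd h hne
      · -- a zero between u and T, contradiction
        have hsub2 : Set.Icc u T ⊆ Set.Icc 0 T :=
          Set.Icc_subset_Icc (le_trans hτIcc.1 hu.1.le) le_rfl
        obtain ⟨c, hc, hc0⟩ := intermediate_value_Icc' hu.2 (hcont.mono hsub2)
          (⟨hyTneg.le, h.le⟩ : (0:ℝ) ∈ Set.Icc (y T) (y u))
        have : c ∈ S := ⟨⟨le_trans hτS.1.1 (le_trans hu.1.le hc.1), hc.2⟩, hc0⟩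
        have : c ≤ τ := le_csSup hSbdd this
        have : u ≤ τ := le_trans hc.1 this
        exact absurd this (not_le.mpr hu.1)
    -- derivative at τ equals a > 0
    have hda : HasDerivWithinAt y a (Set.Icc 0 T) τ := by
      have h := hy τ hτIcc
      rwa [hτ0, abs_zero, Real.zero_rpow (by positivity : r ≠ 0), mul_zero, sub_zero] at h
    rw [hasDerivWithinAt_iff_tendsto_slope] at hda
    have hev : ∀ᶠ u in 𝓝[Set.Icc 0 T \ {τ}] τ, 0 < slope y τ u :=
      hda.eventually (eventually_gt_nhds ha)
    have hle : 𝓝[Set.Ioc τ T] τ ≤ 𝓝[Set.Icc 0 T \ {τ}] τ :=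
      nhdsWithin_mono _ (fun u hu => ⟨⟨le_trans hτIcc.1 hu.1.le, hu.2⟩, ne_of_gt hu.1⟩)
    haveI : (𝓝[Set.Ioc τ T] τ).NeBot := left_nhdsWithin_Ioc_neBot hτT
    obtain ⟨u, hupos, huIoc⟩ := ((hev.filter_mono hle).and self_mem_nhdsWithin).exists
    rw [slope_def_field, hτ0, sub_zero] at hupos
    have huτ : 0 < u - τ := sub_pos.mpr huIoc.1
    have : 0 < y u := by
      have h := mul_pos hupos huτ
      rwa [div_mul_cancel₀ _ (ne_of_gt huτ)] at h
    exact absurd (hiu u huIoc) (not_lt.mpr this.le)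
  -- Step 2: the function g s = (-y s)^(1-r) + b(r-1)s is monotone on [0,T].
  set g : ℝ → ℝ := fun s => (-y s) ^ (1 - r) + b * (r - 1) * s with hgdef
  have key : ∀ s ∈ Set.Icc (0:ℝ) T,
      HasDerivWithinAt g ((r - 1) * a * ((-y s) ^ r)⁻¹) (Set.Icc 0 T) s := by
    intro s hs
    have hys : 0 < -y s := neg_pos.mpr (hneg s hs)
    have habs : |y s| = -y s := abs_of_neg (hneg s hs)
    have h1 : HasDerivWithinAt (fun u => -y u) (-(a - b * (-y s) ^ r)) (Set.Icc 0 T) s := by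
      have h := (hy s hs).neg; rwa [habs] at h
    have h2 : HasDerivWithinAt (fun u => (-y u) ^ (1 - r))
        ((1 - r) * (-y s) ^ (1 - r - 1) * (-(a - b * (-y s) ^ r))) (Set.Icc 0 T) s :=
      HasDerivAt.comp_hasDerivWithinAt (h₂ := fun x => x ^ (1 - r)) s (Real.hasDerivAt_rpow_const (Or.inl hys.ne')) h1
    have h3 : HasDerivWithinAt (fun u => b * (r - 1) * u) (b * (r - 1)) (Set.Icc 0 T) s := by
      simpa using ((hasDerivAt_id s).const_mul (b * (r - 1))).hasDerivWithinAt
    have h4 := h2.add h3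
    convert h4 using 1
    · rfl
    · rfl
    · rfl
    have hvpos : 0 < (-y s) ^ r := Real.rpow_pos_of_pos hys r
    have hpow : (-y s) ^ (1 - r - 1) = ((-y s) ^ r)⁻¹ := by
      rw [show (1 - r - 1 : ℝ) = -r by ring, Real.rpow_neg hys.le]
    rw [hpow]
    field_simp
    ring
  have hmono : MonotoneOn g (Set.Icc 0 T) := by
    apply monotoneOn_of_deriv_nonneg (convex_Icc 0 T)
    · exact fun s hs => (key s hs).continuousWithinAt
    · intro s hs
      rw [interior_Icc] at hs
      exact (((key s (Set.mem_Icc_of_Ioo hs)).hasDerivAt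
        (Icc_mem_nhds hs.1 hs.2)).differentiableAt).differentiableWithinAt
    · intro s hs
      rw [interior_Icc] at hs
      have hd := ((key s (Set.mem_Icc_of_Ioo hs)).hasDerivAt (Icc_mem_nhds hs.1 hs.2)).deriv
      rw [hd]
      have hys : 0 < -y s := neg_pos.mpr (hneg s (Set.mem_Icc_of_Ioo hs))
      have hvpos : 0 < (-y s) ^ r := Real.rpow_pos_of_pos hys r
      positivity
  -- conclude
  intro t ht
  have hyt : y t < 0 := hneg t ht
  have hyt' : 0 < -y t := neg_pos.mpr hyt
  have habs : |y t| = -y t := abs_of_neg hyt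
  have habsT : -y T = A := by rw [hyT]; ring
  have hgle : g t ≤ g T := hmono ht (Set.right_mem_Icc.mpr hT.le) ht.2
  have h2 : (-y t) ^ (1 - r) ≤ A ^ (1 - r) + b * (r - 1) * (T - t) := by
    have hgt : g t = (-y t) ^ (1 - r) + b * (r - 1) * t := rfl
    have hgT : g T = A ^ (1 - r) + b * (r - 1) * T := by
      simp only [hgdef, habsT]
    rw [hgt, hgT] at hgle
    linarith
  have hM : 0 < A ^ (1 - r) + b * (r - 1) * (T - t) := by
    have h1 : 0 < A ^ (1 - r) := Real.rpow_pos_of_pos hA0 _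
    have h2' : 0 ≤ b * (r - 1) * (T - t) := by
      have : 0 ≤ T - t := sub_nonneg.mpr ht.2
      positivity
    linarith
  refine ⟨?_, by rw [habs]; exact h2⟩
  rw [habs]
  have hzpos : 0 < (-y t) ^ (1 - r) := Real.rpow_pos_of_pos hyt' _
  have hexp : (1 : ℝ) / (1 - r) ≤ 0 :=
    le_of_lt (div_neg_of_pos_of_neg one_pos (by linarith))
  have hle := Real.rpow_le_rpow_of_nonpos hzpos h2 hexp
  calc (A ^ (1 - r) + b * (r - 1) * (T - t)) ^ (1 / (1 - r))
      ≤ ((-y t) ^ (1 - r)) ^ (1 / (1 - r)) := hle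
    _ = -y t := by
        rw [← Real.rpow_mul hyt'.le, mul_one_div_cancel (by linarith : (1:ℝ) - r ≠ 0),
          Real.rpow_one]
end

section
/- Let a, b > 0, r > 1, T > 0, A > (a/b)^{1/r}, and let y be the unique solution of the terminal value problem y'(t) = a − b|y(t)|^r on [0,T], y(T) = −A. Then for every t ∈ [0,T], |y(t)| ≤ (a(r−1)T/(a/b)^{1/r} + 1)^{1/(r−1)} · (b(r−1)(T−t) + A^{1−r})^{1/(1−r)}. -/
set_option maxHeartbeats 1000000 in
/-- upper bound on |y| for the solution of the terminal value
problem y' = a - b|y|^r, y(T) = -A. -/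
theorem stmt_5 (a b r T A : ℝ) (ha : 0 < a) (hb : 0 < b) (hr : 1 < r)
    (hT : 0 < T) (hA : (a / b) ^ (1 / r) < A)
    (y : ℝ → ℝ)
    (hy : ∀ t ∈ Set.Icc (0:ℝ) T,
      HasDerivWithinAt y (a - b * |y t| ^ r) (Set.Icc (0:ℝ) T) t)
    (hyT : y T = -A) :
    ∀ t ∈ Set.Icc (0:ℝ) T,
      |y t| ≤ (a * (r - 1) * T / (a / b) ^ (1 / r) + 1) ^ (1 / (r - 1)) *
        (b * (r - 1) * (T - t) + A ^ (1 - r)) ^ (1 / (1 - r)) := by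
  have hab : (0:ℝ) < a / b := div_pos ha hb
  set c : ℝ := (a / b) ^ (1 / r) with hc_def
  have hc : 0 < c := Real.rpow_pos_of_pos hab _
  clear_value c
  have hr0 : r ≠ 0 := by positivity
  have hcr : c ^ r = a / b := by
    rw [hc_def, ← Real.rpow_mul hab.le, one_div_mul_cancel hr0, Real.rpow_one]
  have hcA : c < A := hA
  have hA0 : 0 < A := hc.trans hcA
  have hycont : ContinuousOn y (Set.Icc 0 T) := fun t ht => (hy t ht).continuousWithinAt
  -- Step B : y t ≤ -c on [0,T]
  have hneg : ∀ t ∈ Set.Icc (0:ℝ) T, y t ≤ -c := by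
    intro t ht
    by_contra hcon
    push_neg at hcon
    set t0 := t with ht0def
    have ht0 : t0 ∈ Set.Icc (0:ℝ) T := ht
    have ht0y : -c < y t0 := hcon
    have hsub : Set.Icc t0 T ⊆ Set.Icc (0:ℝ) T := Set.Icc_subset_Icc_left ht0.1
    have hclosed : IsClosed (Set.Icc t0 T ∩ y ⁻¹' Set.Iic (-c)) :=
      (hycont.mono hsub).preimage_isClosed_of_isClosed isClosed_Icc isClosed_Iic
    set S := Set.Icc t0 T ∩ y ⁻¹' Set.Iic (-c) with hSdef
    have hTS : T ∈ S := ⟨⟨ht0.2, le_refl T⟩, by simp only [Set.mem_preimage, Set.mem_Iic, hyT]; linarith⟩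
    have hScomp : IsCompact S := isCompact_Icc.of_isClosed_subset hclosed Set.inter_subset_left
    set t1 := sInf S with ht1def
    have ht1S : t1 ∈ S := hScomp.sInf_mem ⟨T, hTS⟩
    have ht1T : t1 ≤ T := ht1S.1.2
    have ht1t0 : t0 ≤ t1 := ht1S.1.1
    have ht1mem : t1 ∈ Set.Icc (0:ℝ) T := ⟨le_trans ht0.1 ht1t0, ht1T⟩
    have ht1low : ∀ s ∈ Set.Ico t0 t1, -c < y s := by
      intro s hs
      by_contra hle
      push_neg at hle
      have hsS : s ∈ S := ⟨⟨hs.1, le_trans hs.2.le ht1T⟩, hle⟩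
      exact absurd (csInf_le hScomp.bddBelow hsS) (not_le.mpr hs.2)
    have ht0t1 : t0 < t1 := by
      rcases eq_or_lt_of_le ht1t0 with h | h
      · exact absurd ht1S.2 (by simp only [Set.mem_preimage, Set.mem_Iic, ← h]; linarith)
      · exact h
    have hyt1 : y t1 = -c := by
      refine le_antisymm ht1S.2 ?_
      have hclos : t1 ∈ closure (Set.Ico t0 t1) := by
        rw [closure_Ico ht0t1.ne]; exact ⟨ht0t1.le, le_refl _⟩
      haveI hne : (nhdsWithin t1 (Set.Ico t0 t1)).NeBot :=
        mem_closure_iff_nhdsWithin_neBot.mp hclos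
      have hsub2 : Set.Ico t0 t1 ⊆ Set.Icc (0:ℝ) T := fun s hs =>
        ⟨le_trans ht0.1 hs.1, le_trans hs.2.le ht1T⟩
      have htend : Filter.Tendsto y (nhdsWithin t1 (Set.Ico t0 t1)) (nhds (y t1)) :=
        (hycont t1 ht1mem).mono hsub2
      refine ge_of_tendsto htend ?_
      filter_upwards [self_mem_nhdsWithin] with s hs
      exact (ht1low s hs).le
    obtain ⟨η, hη, hball⟩ := Metric.continuousWithinAt_iff.mp (hycont t1 ht1mem) c hc
    set t2 := max t0 (t1 - η / 2) with ht2def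
    have ht2t1 : t2 < t1 := by
      apply max_lt ht0t1; linarith
    have ht2ge : t0 ≤ t2 := le_max_left _ _
    have ht2mem : t2 ∈ Set.Icc (0:ℝ) T := ⟨le_trans ht0.1 ht2ge, le_trans ht2t1.le ht1T⟩
    have hIccsub : Set.Icc t2 t1 ⊆ Set.Icc (0:ℝ) T := fun s hs =>
      ⟨le_trans ht2mem.1 hs.1, le_trans hs.2 ht1T⟩
    have hrange : ∀ s ∈ Set.Ico t2 t1, -c < y s ∧ y s < 0 := by
      intro s hs
      have hs1 : -c < y s := ht1low s ⟨le_trans ht2ge hs.1, hs.2⟩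
      have hd : dist s t1 < η := by
        rw [Real.dist_eq, abs_lt]
        constructor
        · have : t1 - η / 2 ≤ t2 := le_max_right _ _
          have := hs.1; linarith
        · linarith [hs.2]
      have := hball (hIccsub ⟨hs.1, hs.2.le⟩) hd
      rw [Real.dist_eq, hyt1, abs_lt] at this
      exact ⟨hs1, by linarith [this.2]⟩
    have hmono : StrictMonoOn y (Set.Icc t2 t1) := by
      apply strictMonoOn_of_deriv_pos (convex_Icc t2 t1) (hycont.mono hIccsub)
      intro s hs
      rw [interior_Icc] at hs
      have hsmem : s ∈ Set.Icc (0:ℝ) T := hIccsub ⟨hs.1.le, hs.2.le⟩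
      have hsIoo : s ∈ Set.Ioo (0:ℝ) T :=
        ⟨lt_of_le_of_lt ht2mem.1 hs.1, lt_of_lt_of_le hs.2 ht1T⟩
      have hder : HasDerivAt y (a - b * |y s| ^ r) s :=
        (hy s hsmem).hasDerivAt (Icc_mem_nhds hsIoo.1 hsIoo.2)
      rw [hder.deriv]
      have hys := hrange s ⟨hs.1.le, hs.2⟩
      have habs : |y s| < c := abs_lt.mpr ⟨hys.1, lt_trans hys.2 hc⟩
      have hpow : |y s| ^ r < c ^ r :=
        Real.rpow_lt_rpow (abs_nonneg _) habs (lt_trans zero_lt_one hr)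
      rw [hcr] at hpow
      have : b * |y s| ^ r < b * (a / b) := mul_lt_mul_of_pos_left hpow hb
      rw [mul_div_cancel₀ a hb.ne'] at this
      linarith
    have h1 : y t2 < y t1 := hmono ⟨le_refl t2, ht2t1.le⟩ ⟨ht2t1.le, le_refl t1⟩ ht2t1
    have h2 : -c < y t2 := ht1low t2 ⟨ht2ge, ht2t1⟩
    rw [hyt1] at h1
    linarith
  -- basic facts
  have hyneg : ∀ t ∈ Set.Icc (0:ℝ) T, y t < 0 := fun t ht =>
    lt_of_le_of_lt (hneg t ht) (by linarith)
  have hupos : ∀ t ∈ Set.Icc (0:ℝ) T, 0 < -y t := fun t ht => neg_pos.mpr (hyneg t ht)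
  have hucge : ∀ t ∈ Set.Icc (0:ℝ) T, c ≤ -y t := fun t ht => by
    have := hneg t ht; linarith
  have habs : ∀ t ∈ Set.Icc (0:ℝ) T, |y t| = -y t := fun t ht => abs_of_neg (hyneg t ht)
  set α := a * (r - 1) / c with hα_def
  clear_value α
  have hr1 : (0:ℝ) < r - 1 := by linarith
  have hα0 : 0 ≤ α := by rw [hα_def]; positivity
  have hA1r : 0 < A ^ (1 - r) := Real.rpow_pos_of_pos hA0 _
  have hkey : α * A ^ (1 - r) ≤ b * (r - 1) := by
    have h1 : A ^ (1 - r) ≤ c ^ (1 - r) :=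
      Real.rpow_le_rpow_of_nonpos hc hcA.le (by linarith)
    have h2 : c ^ (1 - r) = c * (b / a) := by
      have h3 : c ^ (1 - r) = c ^ (1:ℝ) * c ^ (-r) := by
        rw [← Real.rpow_add hc]; ring_nf
      rw [h3, Real.rpow_one, Real.rpow_neg hc.le, hcr]
      rw [inv_div]
    have h4 : α * A ^ (1 - r) ≤ α * (c * (b / a)) :=
      mul_le_mul_of_nonneg_left (h2 ▸ h1) hα0
    have h5 : α * (c * (b / a)) = b * (r - 1) := by
      rw [hα_def]; field_simp
    linarith
  -- the function w = (-y)^(1-r) and its derivative bound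
  have hw' : ∀ t ∈ Set.Icc (0:ℝ) T,
      HasDerivWithinAt (fun s => (-y s) ^ (1 - r))
        ((-(a - b * (-y t) ^ r)) * (1 - r) * (-y t) ^ (1 - r - 1)) (Set.Icc (0:ℝ) T) t := by
    intro t ht
    have h1 : HasDerivWithinAt (fun s => -y s) (-(a - b * |y t| ^ r)) (Set.Icc (0:ℝ) T) t :=
      (hy t ht).neg
    rw [habs t ht] at h1
    exact h1.rpow_const (Or.inl (hupos t ht).ne')
  have hwbound : ∀ t ∈ Set.Icc (0:ℝ) T,
      (-(a - b * (-y t) ^ r)) * (1 - r) * (-y t) ^ (1 - r - 1) ≤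
        -(b * (r - 1)) + α * (-y t) ^ (1 - r) := by
    intro t ht
    set u := -y t with hu_def
    clear_value u
    have hu0 : 0 < u := by rw [hu_def]; exact hupos t ht
    have huc : c ≤ u := by rw [hu_def]; exact hucge t ht
    have hexp : (1:ℝ) - r - 1 = -r := by ring
    rw [hexp]
    have hcancel : u ^ r * u ^ (-r : ℝ) = 1 := by
      rw [← Real.rpow_add hu0]; simp
    have hsplit : u ^ ((1:ℝ) - r) = u ^ (-r : ℝ) * u := by
      have : ((1:ℝ) - r) = -r + 1 := by ring
      rw [this, Real.rpow_add hu0, Real.rpow_one]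
    have hur0 : 0 < u ^ (-r : ℝ) := Real.rpow_pos_of_pos hu0 _
    have hdivle : u ^ (-r : ℝ) ≤ u ^ ((1:ℝ) - r) / c := by
      rw [hsplit]
      rw [le_div_iff₀ hc]
      have := mul_le_mul_of_nonneg_left huc hur0.le
      linarith [this]
    have h6 : a * (r - 1) * (u ^ (-r:ℝ)) ≤ a * (r-1) * (u ^ ((1:ℝ)-r) / c) :=
      mul_le_mul_of_nonneg_left hdivle (by positivity)
    have h7 : a * (r-1) * (u ^ ((1:ℝ)-r) / c) = α * u ^ ((1:ℝ) - r) := by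
      rw [hα_def]; field_simp
    have h8 : (-(a - b * u ^ r)) * (1 - r) * u ^ (-r:ℝ) =
        -(b * (r-1)) * (u ^ r * u ^ (-r:ℝ)) + a * (r - 1) * (u ^ (-r:ℝ)) := by ring
    rw [h8, hcancel]
    linarith [h6, h7.symm ▸ h6]
  -- derivative of ψ = φ / D
  have hφ' : ∀ t ∈ Set.Icc (0:ℝ) T,
      HasDerivWithinAt (fun s => b * (r - 1) * (T - s) + A ^ (1 - r))
        (b * (r - 1) * (-1)) (Set.Icc (0:ℝ) T) t := by
    intro t ht
    have h1 : HasDerivWithinAt (fun s : ℝ => T - s) (-1 : ℝ) (Set.Icc (0:ℝ) T) t := by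
      simpa using (hasDerivWithinAt_id t (Set.Icc (0:ℝ) T)).const_sub T
    exact (h1.const_mul (b * (r - 1))).add_const _
  have hD' : ∀ t ∈ Set.Icc (0:ℝ) T,
      HasDerivWithinAt (fun s => 1 + α * (T - s)) (α * (-1)) (Set.Icc (0:ℝ) T) t := by
    intro t ht
    have h1 : HasDerivWithinAt (fun s : ℝ => T - s) (-1 : ℝ) (Set.Icc (0:ℝ) T) t := by
      simpa using (hasDerivWithinAt_id t (Set.Icc (0:ℝ) T)).const_sub T
    have := (h1.const_mul α).const_add (1:ℝ)
    simpa using this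
  have hDpos : ∀ t ∈ Set.Icc (0:ℝ) T, 0 < 1 + α * (T - t) := by
    intro t ht
    have h1 : 0 ≤ T - t := by linarith [ht.2]
    nlinarith [mul_nonneg hα0 h1]
  have hφpos : ∀ t ∈ Set.Icc (0:ℝ) T, 0 < b * (r - 1) * (T - t) + A ^ (1 - r) := by
    intro t ht
    have h1 : 0 ≤ T - t := by linarith [ht.2]
    nlinarith [mul_nonneg (mul_nonneg hb.le hr1.le) h1]
  have hψ' : ∀ t ∈ Set.Icc (0:ℝ) T,
      HasDerivWithinAt (fun s => (b * (r - 1) * (T - s) + A ^ (1 - r)) / (1 + α * (T - s)))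
        (((b * (r - 1) * (-1)) * (1 + α * (T - t)) -
          (b * (r - 1) * (T - t) + A ^ (1 - r)) * (α * (-1))) / (1 + α * (T - t)) ^ 2)
        (Set.Icc (0:ℝ) T) t := by
    intro t ht
    exact (hφ' t ht).div (hD' t ht) (hDpos t ht).ne'
  -- the function F
  set F : ℝ → ℝ := fun s => Real.exp (-α * s) *
      ((-y s) ^ (1 - r) - (b * (r - 1) * (T - s) + A ^ (1 - r)) / (1 + α * (T - s))) with hF_def
  have hexpd : ∀ t : ℝ, HasDerivWithinAt (fun s => Real.exp (-α * s))
      (Real.exp (-α * t) * (-α)) (Set.Icc (0:ℝ) T) t := by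
    intro t
    have := ((hasDerivWithinAt_id t (Set.Icc (0:ℝ) T)).const_mul (-α)).exp
    simpa using this
  have hFd : ∀ t ∈ Set.Icc (0:ℝ) T, HasDerivWithinAt F
      (Real.exp (-α * t) * (-α) *
        ((-y t) ^ (1 - r) - (b * (r - 1) * (T - t) + A ^ (1 - r)) / (1 + α * (T - t))) +
       Real.exp (-α * t) *
        ((-(a - b * (-y t) ^ r)) * (1 - r) * (-y t) ^ (1 - r - 1) -
          ((b * (r - 1) * (-1)) * (1 + α * (T - t)) -
            (b * (r - 1) * (T - t) + A ^ (1 - r)) * (α * (-1))) / (1 + α * (T - t)) ^ 2))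
      (Set.Icc (0:ℝ) T) t := by
    intro t ht
    exact (hexpd t).mul ((hw' t ht).sub (hψ' t ht))
  -- derivative of F is nonpositive on the interior
  have hF'le : ∀ t ∈ Set.Icc (0:ℝ) T,
      Real.exp (-α * t) * (-α) *
        ((-y t) ^ (1 - r) - (b * (r - 1) * (T - t) + A ^ (1 - r)) / (1 + α * (T - t))) +
      Real.exp (-α * t) *
        ((-(a - b * (-y t) ^ r)) * (1 - r) * (-y t) ^ (1 - r - 1) -
          ((b * (r - 1) * (-1)) * (1 + α * (T - t)) -
            (b * (r - 1) * (T - t) + A ^ (1 - r)) * (α * (-1))) / (1 + α * (T - t)) ^ 2) ≤ 0 := by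
    intro t ht
    set E := Real.exp (-α * t) with hE_def
    have hE : 0 < E := by rw [hE_def]; exact Real.exp_pos _
    set W := (-y t) ^ ((1:ℝ) - r) with hW_def
    set f := b * (r - 1) * (T - t) + A ^ (1 - r) with hf_def
    set d := 1 + α * (T - t) with hd_def
    set Q := (-(a - b * (-y t) ^ r)) * (1 - r) * (-y t) ^ ((1:ℝ) - r - 1) with hQ_def
    set R := ((b * (r - 1) * (-1)) * d - f * (α * (-1))) / d ^ 2 with hR_def
    have hd0 : 0 < d := by rw [hd_def]; exact hDpos t ht
    have hf0' : 0 < f := by rw [hf_def]; exact hφpos t ht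
    have hd1 : 1 ≤ d := by
      rw [hd_def]
      have h1 : 0 ≤ T - t := by linarith [ht.2]
      nlinarith [mul_nonneg hα0 h1]
    clear_value E W f d Q R
    have hf0 : 0 < f := hf0'
    -- Ψ' ≥ α ψ - β
    have hΨ : α * (f / d) - b * (r - 1) ≤ R := by
      have hN0 : α * f - b * (r - 1) * d ≤ 0 := by
        have hexp : α * f - b * (r - 1) * d = α * A ^ (1 - r) - b * (r - 1) := by
          rw [hf_def, hd_def]; ring
        linarith [hkey, hexp]
      have heq1 : α * (f / d) - b * (r - 1) = (α * f - b * (r - 1) * d) / d := by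
        field_simp
      have heq2 : R = (α * f - b * (r - 1) * d) / d ^ 2 := by
        rw [hR_def]; congr 1; ring
      rw [heq1, heq2, div_le_div_iff₀ hd0 (by positivity)]
      nlinarith [mul_nonneg (mul_nonneg (neg_nonneg.mpr hN0) hd0.le) (sub_nonneg.mpr hd1)]
    have hw := hwbound t ht
    rw [← hW_def, ← hQ_def] at hw
    have hmain : (-α) * (W - f / d) + (Q - R) ≤ 0 := by linarith [hΨ, hw]
    have h9 : E * (-α) * (W - f / d) + E * (Q - R) =
        E * ((-α) * (W - f / d) + (Q - R)) := by ring
    rw [h9]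
    exact mul_nonpos_iff.mpr (Or.inl ⟨hE.le, hmain⟩)
  -- F is antitone on [0,T]
  have hFanti : AntitoneOn F (Set.Icc (0:ℝ) T) := by
    apply antitoneOn_of_deriv_nonpos (convex_Icc 0 T)
      (fun t ht => (hFd t ht).continuousWithinAt)
    · intro t ht
      rw [interior_Icc] at ht
      exact ((hFd t ⟨ht.1.le, ht.2.le⟩).hasDerivAt
        (Icc_mem_nhds ht.1 ht.2)).differentiableAt.differentiableWithinAt
    · intro t ht
      rw [interior_Icc] at ht
      have hmem : t ∈ Set.Icc (0:ℝ) T := ⟨ht.1.le, ht.2.le⟩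
      rw [((hFd t hmem).hasDerivAt (Icc_mem_nhds ht.1 ht.2)).deriv]
      exact hF'le t hmem
  have hFT : F T = 0 := by
    simp [hF_def, hyT]
  -- conclusion
  intro t ht
  have hTmem : T ∈ Set.Icc (0:ℝ) T := ⟨hT.le, le_refl T⟩
  have hFt : (0:ℝ) ≤ F t := by
    have h := hFanti ht hTmem ht.2
    rw [hFT] at h
    exact h
  have hE : 0 < Real.exp (-α * t) := Real.exp_pos _
  have hFt' : 0 ≤ Real.exp (-α * t) *
      ((-y t) ^ (1 - r) - (b * (r - 1) * (T - t) + A ^ (1 - r)) / (1 + α * (T - t))) := by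
    rw [hF_def] at hFt
    exact hFt
  have hwψ : (b * (r - 1) * (T - t) + A ^ (1 - r)) / (1 + α * (T - t)) ≤ (-y t) ^ (1 - r) := by
    have h2 := (mul_nonneg_iff_of_pos_left hE).mp hFt'
    linarith
  set f := b * (r - 1) * (T - t) + A ^ (1 - r) with hf_def
  set d := 1 + α * (T - t) with hd_def
  have hd0 : 0 < d := by rw [hd_def]; exact hDpos t ht
  have hf0 : 0 < f := by rw [hf_def]; exact hφpos t ht
  clear_value f d
  set M := a * (r - 1) * T / c + 1 with hM_def
  clear_value M
  have hM1 : 1 ≤ M := by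
    rw [hM_def]
    have h1 : 0 ≤ a * (r - 1) * T / c := by positivity
    linarith
  have hM0 : 0 < M := lt_of_lt_of_le zero_lt_one hM1
  have hdM : d ≤ M := by
    have h1 : α * (T - t) ≤ α * T := mul_le_mul_of_nonneg_left (by linarith [ht.1]) hα0
    have h2 : α * T = a * (r - 1) * T / c := by rw [hα_def]; ring
    rw [hd_def, hM_def]; linarith
  have hfM : f / M ≤ f / d := div_le_div_of_nonneg_left hf0.le hd0 hdM
  have hwM : f / M ≤ (-y t) ^ ((1:ℝ) - r) := le_trans hfM hwψ
  have hu0 : 0 < -y t := hupos t ht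
  have hfM0 : 0 < f / M := div_pos hf0 hM0
  have hz : (1:ℝ) / (1 - r) ≤ 0 := by
    apply div_nonpos_of_nonneg_of_nonpos zero_le_one
    linarith
  have h5 : ((-y t) ^ ((1:ℝ) - r)) ^ ((1:ℝ) / (1 - r)) ≤ (f / M) ^ ((1:ℝ) / (1 - r)) :=
    Real.rpow_le_rpow_of_nonpos hfM0 hwM hz
  have h6 : ((-y t) ^ ((1:ℝ) - r)) ^ ((1:ℝ) / (1 - r)) = -y t := by
    rw [← Real.rpow_mul hu0.le]
    have h61 : ((1:ℝ) - r) * (1 / (1 - r)) = 1 := by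
      have : (1:ℝ) - r ≠ 0 := by linarith
      field_simp
    rw [h61, Real.rpow_one]
  have h7 : (f / M) ^ ((1:ℝ) / (1 - r)) = M ^ ((1:ℝ) / (r - 1)) * f ^ ((1:ℝ) / (1 - r)) := by
    rw [Real.div_rpow hf0.le hM0.le]
    have h8 : M ^ ((1:ℝ) / (1 - r)) = (M ^ ((1:ℝ) / (r - 1)))⁻¹ := by
      rw [← Real.rpow_neg hM0.le]
      congr 1
      have h81 : r - 1 = -(1 - r) := by ring
      rw [h81, div_neg, neg_neg]
    rw [h8, div_eq_mul_inv, inv_inv]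
    ring
  rw [habs t ht]
  calc -y t = ((-y t) ^ ((1:ℝ) - r)) ^ ((1:ℝ) / (1 - r)) := h6.symm
    _ ≤ (f / M) ^ ((1:ℝ) / (1 - r)) := h5
    _ = M ^ ((1:ℝ) / (r - 1)) * f ^ ((1:ℝ) / (1 - r)) := h7
end

section
/- Let φ ∈ (0,1], set r := 1 + 1/φ, and let a, b > 0 and T > 0. Then there exists a constant C ≥ 1, depending only on a, b, φ and T (but not on A), such that for every A > (a/b)^{1/r} the unique solution y_A of the terminal value problem y'(t) = a − b|y(t)|^r on [0,T], y(T) = −A, satisfies 1/(C (A^{−1/φ} + T − t)^φ) ≤ |y_A(t)| ≤ C/(A^{−1/φ} + T − t)^φ for all t ∈ [0,T]. -/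
open Set

lemma mvt_two_sided {f f' : ℝ → ℝ} {x y m M : ℝ} (hxy : x ≤ y)
    (hd : ∀ t ∈ Set.Icc x y, HasDerivWithinAt f (f' t) (Set.Icc x y) t)
    (hm : ∀ t ∈ Set.Icc x y, m ≤ f' t) (hM : ∀ t ∈ Set.Icc x y, f' t ≤ M) :
    m * (y - x) ≤ f y - f x ∧ f y - f x ≤ M * (y - x) := by
  set k := (m + M) / 2 with hk
  have hd' : ∀ t ∈ Set.Icc x y,
      HasDerivWithinAt (fun u => f u - k * u) (f' t - k) (Set.Icc x y) t := by
    intro t ht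
    have h1 : HasDerivWithinAt (fun u => k * u) (k * 1) (Set.Icc x y) t :=
      (hasDerivWithinAt_id t _).const_mul k
    have h := (hd t ht).sub h1
    rw [mul_one] at h
    exact h
  have hb : ∀ t ∈ Set.Ico x y, ‖f' t - k‖ ≤ (M - m) / 2 := by
    intro t ht
    have h1 := hm t (Set.Ico_subset_Icc_self ht)
    have h2 := hM t (Set.Ico_subset_Icc_self ht)
    rw [Real.norm_eq_abs, abs_le]
    constructor <;> simp only [hk] <;> linarith
  have key := norm_image_sub_le_of_norm_deriv_le_segment' hd' hb y (Set.right_mem_Icc.2 hxy)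
  rw [Real.norm_eq_abs, abs_le] at key
  obtain ⟨k1, k2⟩ := key
  constructor <;> nlinarith

/-- increment of x^r on [c, K]. -/
lemma rpow_incr {r c K : ℝ} (hr : 1 ≤ r) (hc : 0 < c) :
    ∀ w, c ≤ w → w ≤ K → w ^ r - c ^ r ≤ r * K ^ (r - 1) * (w - c) := by
  intro w hcw hwK
  have hd : ∀ x ∈ Set.Icc c w, HasDerivWithinAt (fun u : ℝ => u ^ r)
      (r * x ^ (r - 1)) (Set.Icc c w) x := by
    intro x hx
    exact (Real.hasDerivAt_rpow_const (Or.inl (ne_of_gt (lt_of_lt_of_le hc hx.1)))).hasDerivWithinAt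
  have hM : ∀ x ∈ Set.Icc c w, r * x ^ (r - 1) ≤ r * K ^ (r - 1) := by
    intro x hx
    have hx0 : (0:ℝ) ≤ x := (hc.trans_le hx.1).le
    have h : x ^ (r - 1) ≤ K ^ (r - 1) :=
      Real.rpow_le_rpow hx0 (hx.2.trans hwK) (by linarith)
    exact mul_le_mul_of_nonneg_left h (by linarith)
  have hm : ∀ x ∈ Set.Icc c w, (0:ℝ) ≤ r * x ^ (r - 1) := by
    intro x hx
    have hx0 : (0:ℝ) < x := hc.trans_le hx.1
    positivity
  have := (mvt_two_sided hcw hd hm hM).2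
  linarith

set_option maxHeartbeats 1600000 in
/-- two-sided blow-up rate, uniform in A, for the solutions of the
terminal value problems y' = a - b|y|^{1+1/φ}, y(T) = -A. -/
theorem stmt_6 (φ a b T : ℝ) (hφ0 : 0 < φ) (hφ1 : φ ≤ 1)
    (ha : 0 < a) (hb : 0 < b) (hT : 0 < T) :
    ∃ C : ℝ, 1 ≤ C ∧
      ∀ A : ℝ, (a / b) ^ (1 / (1 + 1 / φ)) < A →
        ∀ y : ℝ → ℝ,
          (∀ t ∈ Set.Icc (0:ℝ) T,
            HasDerivWithinAt y (a - b * |y t| ^ (1 + 1 / φ)) (Set.Icc (0:ℝ) T) t) →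
          y T = -A →
          ∀ t ∈ Set.Icc (0:ℝ) T,
            1 / (C * (A ^ (-1 / φ) + T - t) ^ φ) ≤ |y t| ∧
            |y t| ≤ C / (A ^ (-1 / φ) + T - t) ^ φ := by
  have hφ' : (0:ℝ) < 1 / φ := by positivity
  set r : ℝ := 1 + 1 / φ with hr
  have hr1 : 1 < r := by simp [hr]; positivity
  have hrpos : 0 < r := by linarith
  have hrne : r ≠ 0 := ne_of_gt hrpos
  have hab0 : (0:ℝ) < a / b := div_pos ha hb
  set c : ℝ := (a / b) ^ (1 / r) with hc
  have hc0 : 0 < c := Real.rpow_pos_of_pos hab0 _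
  have hcr : c ^ r = a / b := by
    rw [hc, ← Real.rpow_mul hab0.le, one_div, inv_mul_cancel₀ hrne, Real.rpow_one]
  set z0 : ℝ := (2 * a / b) ^ (1 / r) with hz0
  have hz00 : 0 < z0 := Real.rpow_pos_of_pos (by positivity) _
  have hz0r : z0 ^ r = 2 * a / b := by
    rw [hz0, ← Real.rpow_mul (by positivity), one_div, inv_mul_cancel₀ hrne, Real.rpow_one]
  have hcz0 : c ≤ z0 := by
    rw [hc, hz0]
    apply Real.rpow_le_rpow hab0.le _ (by positivity)
    rw [div_le_div_iff₀ hb hb]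
    nlinarith
  -- constants
  obtain ⟨β, hβ⟩ : ∃ x : ℝ, x = max 1 (b / φ) := ⟨_, rfl⟩
  obtain ⟨γ, hγ⟩ : ∃ x : ℝ, x = min 1 (b / (2 * φ)) := ⟨_, rfl⟩
  have hβ1 : (1:ℝ) ≤ β := hβ ▸ le_max_left _ _
  have hβb : b / φ ≤ β := hβ ▸ le_max_right _ _
  have hβ0 : (0:ℝ) < β := by linarith
  have hγ0 : (0:ℝ) < γ := hγ ▸ lt_min one_pos (by positivity)
  have hγ1 : γ ≤ 1 := hγ ▸ min_le_left _ _
  have hγb : γ ≤ b / (2 * φ) := hγ ▸ min_le_right _ _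
  obtain ⟨M0, hM0def⟩ : ∃ x : ℝ, x = c ^ (-(1 / φ)) + T := ⟨_, rfl⟩
  have hM0 : (0:ℝ) < M0 := by
    rw [hM0def]
    have := Real.rpow_pos_of_pos hc0 (-(1 / φ)); linarith
  obtain ⟨C, hC⟩ : ∃ x : ℝ, x = max 1 (max (β ^ φ) (max (z0 * M0 ^ φ) ((γ ^ φ)⁻¹))) := ⟨_, rfl⟩
  have hC1 : (1:ℝ) ≤ C := hC ▸ le_max_left _ _
  have hC0 : (0:ℝ) < C := by linarith
  have hCβ : β ^ φ ≤ C := hC ▸ le_trans (le_max_left _ _) (le_max_right _ _)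
  have hCz0 : z0 * M0 ^ φ ≤ C :=
    hC ▸ le_trans (le_trans (le_max_left _ _) (le_max_right _ _)) (le_max_right _ _)
  have hCγ : (γ ^ φ)⁻¹ ≤ C :=
    hC ▸ le_trans (le_trans (le_max_right _ _) (le_max_right _ _)) (le_max_right _ _)
  refine ⟨C, hC1, ?_⟩
  intro A hA y hy hyT
  have hcA : c < A := hA
  have hApos : (0:ℝ) < A := hc0.trans hcA
  set z : ℝ → ℝ := fun t => -y t with hzdef
  have hzT : z T = A := by simp [hzdef, hyT]
  have hycont : ContinuousOn y (Set.Icc 0 T) := fun t ht => (hy t ht).continuousWithinAt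
  have hzcont : ContinuousOn z (Set.Icc 0 T) := hycont.neg
  have hTmem : T ∈ Set.Icc (0:ℝ) T := Set.right_mem_Icc.2 hT.le
  obtain ⟨x0, hx0mem, hx0max⟩ :=
    isCompact_Icc.exists_isMaxOn (⟨T, hTmem⟩ : (Set.Icc (0:ℝ) T).Nonempty) hzcont
  obtain ⟨K, hKeq⟩ : ∃ x : ℝ, x = z x0 := ⟨_, rfl⟩
  have hKbd : ∀ u ∈ Set.Icc (0:ℝ) T, z u ≤ K := fun u hu => hKeq ▸ hx0max hu
  have hAK : A ≤ K := by have := hKbd T hTmem; rwa [hzT] at this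
  have hKpos : 0 < K := hApos.trans_le hAK
  -- derivative of z
  have hzd : ∀ u ∈ Set.Icc (0:ℝ) T, y u < 0 →
      HasDerivWithinAt z (b * (z u) ^ r - a) (Set.Icc (0:ℝ) T) u := by
    intro u hu hyu
    have h1 := (hy u hu).neg
    have h2 : |y u| = z u := by rw [abs_of_neg hyu]
    have h3 : -(a - b * |y u| ^ r) = b * (z u) ^ r - a := by
      rw [h2]; ring
    rw [hzdef]
    exact h3 ▸ h1
  -- bounds from c ≤ z u
  have hstep : ∀ w : ℝ, c ≤ w → a ≤ b * w ^ r := by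
    intro w hw
    have : c ^ r ≤ w ^ r := Real.rpow_le_rpow hc0.le hw hrpos.le
    rw [hcr] at this
    calc a = b * (a / b) := by field_simp
    _ ≤ b * w ^ r := mul_le_mul_of_nonneg_left this hb.le
  -- STEP 1 : y < -c on [0,T]
  have key_lt : ∀ t ∈ Set.Icc (0:ℝ) T, y t < -c := by
    by_contra hcon
    push_neg at hcon
    obtain ⟨t0, ht0, hy0⟩ := hcon
    set S : Set ℝ := Set.Icc t0 T ∩ y ⁻¹' (Set.Ici (-c)) with hS
    have hScl : IsClosed S :=
      (hycont.mono (Set.Icc_subset_Icc ht0.1 le_rfl)).preimage_isClosed_of_isClosed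
        isClosed_Icc isClosed_Ici
    have hSne : S.Nonempty := ⟨t0, ⟨le_rfl, ht0.2⟩, hy0⟩
    have hSbd : BddAbove S := ⟨T, fun u hu => hu.1.2⟩
    set t1 : ℝ := sSup S with ht1
    have ht1S : t1 ∈ S := hScl.csSup_mem hSne hSbd
    have ht1mem : t1 ∈ Set.Icc (0:ℝ) T := ⟨ht0.1.trans ht1S.1.1, ht1S.1.2⟩
    have ht1T : t1 < T := by
      rcases lt_or_eq_of_le ht1S.1.2 with h | h
      · exact h
      · exfalso
        have h2 : -c ≤ y t1 := ht1S.2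
        rw [h, hyT] at h2
        linarith
    have hafter : ∀ s ∈ Set.Ioc t1 T, y s < -c := by
      intro s hs
      by_contra h
      push_neg at h
      have hsS : s ∈ S := ⟨⟨ht1S.1.1.trans hs.1.le, hs.2⟩, h⟩
      exact absurd (le_csSup hSbd hsS) (not_le.2 hs.1)
    have hzgt : ∀ s ∈ Set.Ioc t1 T, c < z s := by
      intro s hs
      have := hafter s hs
      simp only [hzdef]; linarith
    have hsubIcc : ∀ s ∈ Set.Ioc t1 T, Set.Icc s T ⊆ Set.Icc (0:ℝ) T := by
      intro s hs u hu
      exact ⟨le_trans (le_trans ht1mem.1 hs.1.le) hu.1, hu.2⟩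
    obtain ⟨L, hL⟩ : ∃ x : ℝ, x = b * (r * K ^ (r - 1)) := ⟨_, rfl⟩
    have hL0 : 0 ≤ L := by rw [hL]; positivity
    obtain ⟨ε, hε⟩ : ∃ x : ℝ, x = Real.exp (Real.log (A - c) - L * T) := ⟨_, rfl⟩
    have hε0 : 0 < ε := hε ▸ Real.exp_pos _
    have hlow : ∀ s ∈ Set.Ioc t1 T, ε ≤ z s - c := by
      intro s hs
      have hsT : s ≤ T := hs.2
      have hd : ∀ u ∈ Set.Icc s T,
          HasDerivWithinAt (fun v => Real.log (z v - c))
            ((b * (z u) ^ r - a) / (z u - c)) (Set.Icc s T) u := by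
        intro u hu
        have huIoc : u ∈ Set.Ioc t1 T := ⟨lt_of_lt_of_le hs.1 hu.1, hu.2⟩
        have hu0T : u ∈ Set.Icc (0:ℝ) T := hsubIcc s hs hu
        have hyu : y u < 0 := by have := hafter u huIoc; linarith
        have hzu := (hzd u hu0T hyu).mono (hsubIcc s hs)
        have hne : z u - c ≠ 0 := ne_of_gt (sub_pos.2 (hzgt u huIoc))
        have := (hzu.sub_const c).log (by simpa using hne)
        simpa using this
      have hm : ∀ u ∈ Set.Icc s T, (0:ℝ) ≤ (b * (z u) ^ r - a) / (z u - c) := by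
        intro u hu
        have huIoc : u ∈ Set.Ioc t1 T := ⟨lt_of_lt_of_le hs.1 hu.1, hu.2⟩
        have h1 := hzgt u huIoc
        have h2 := hstep (z u) h1.le
        apply div_nonneg (by linarith) (by linarith)
      have hMb : ∀ u ∈ Set.Icc s T, (b * (z u) ^ r - a) / (z u - c) ≤ L := by
        intro u hu
        have huIoc : u ∈ Set.Ioc t1 T := ⟨lt_of_lt_of_le hs.1 hu.1, hu.2⟩
        have h1 := hzgt u huIoc
        have h2 : z u ≤ K := hKbd u (hsubIcc s hs hu)
        rw [div_le_iff₀ (by linarith)]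
        have h3 := rpow_incr hr1.le hc0 (z u) h1.le h2
        have h4 : a = b * c ^ r := by rw [hcr]; field_simp
        rw [hL]
        calc b * (z u) ^ r - a = b * ((z u) ^ r - c ^ r) := by rw [h4]; ring
        _ ≤ b * (r * K ^ (r - 1) * (z u - c)) := mul_le_mul_of_nonneg_left h3 hb.le
        _ = b * (r * K ^ (r - 1)) * (z u - c) := by ring
      have := (mvt_two_sided hsT hd hm hMb).2
      have hzs : 0 < z s - c := sub_pos.2 (hzgt s hs)
      have hzTc : z T - c = A - c := by rw [hzT]
      rw [hzTc] at this
      have hs0 : (0:ℝ) ≤ s := le_trans ht1mem.1 hs.1.le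
      have hLs : L * (T - s) ≤ L * T := mul_le_mul_of_nonneg_left (by linarith) hL0
      have hlog : Real.log (A - c) - L * T ≤ Real.log (z s - c) := by linarith
      calc ε ≤ Real.exp (Real.log (z s - c)) := hε ▸ Real.exp_le_exp.2 hlog
      _ = z s - c := Real.exp_log hzs
    -- contradiction at t1
    have hzt1 : z t1 ≤ c := by
      have h2 : -c ≤ y t1 := ht1S.2
      simp only [hzdef]; linarith
    have hcw : ContinuousWithinAt z (Set.Icc 0 T) t1 := hzcont t1 ht1mem
    have hev : ∀ᶠ u in nhdsWithin t1 (Set.Icc (0:ℝ) T), z u < c + ε := by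
      have : Set.Iio (c + ε) ∈ nhds (z t1) := Iio_mem_nhds (by linarith)
      exact hcw this
    have hsub2 : Set.Ioc t1 T ⊆ Set.Icc (0:ℝ) T := fun u hu =>
      ⟨ht1mem.1.trans hu.1.le, hu.2⟩
    have hnb : (nhdsWithin t1 (Set.Ioc t1 T)).NeBot := by
      rw [← mem_closure_iff_nhdsWithin_neBot, closure_Ioc (ne_of_lt ht1T)]
      exact Set.left_mem_Icc.2 ht1T.le
    have hev2 : ∀ᶠ u in nhdsWithin t1 (Set.Ioc t1 T), z u < c + ε :=
      hev.filter_mono (nhdsWithin_mono _ hsub2)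
    have hev3 : ∀ᶠ u in nhdsWithin t1 (Set.Ioc t1 T), u ∈ Set.Ioc t1 T :=
      self_mem_nhdsWithin
    obtain ⟨u, hu1, hu2⟩ := (hev2.and hev3).exists
    have := hlow u hu2
    linarith
  -- consequences of key_lt
  have hzc : ∀ t ∈ Set.Icc (0:ℝ) T, c < z t := by
    intro t ht; have := key_lt t ht; simp only [hzdef]; linarith
  have hyneg : ∀ t ∈ Set.Icc (0:ℝ) T, y t < 0 := fun t ht => by
    have := key_lt t ht; linarith
  have hzd' : ∀ u ∈ Set.Icc (0:ℝ) T,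
      HasDerivWithinAt z (b * (z u) ^ r - a) (Set.Icc (0:ℝ) T) u :=
    fun u hu => hzd u hu (hyneg u hu)
  -- monotonicity of z
  have hmono : ∀ s ∈ Set.Icc (0:ℝ) T, ∀ u ∈ Set.Icc (0:ℝ) T, s ≤ u → z s ≤ z u := by
    intro s hs u hu hsu
    have hsubs : Set.Icc s u ⊆ Set.Icc (0:ℝ) T := fun v hv => ⟨hs.1.trans hv.1, hv.2.trans hu.2⟩
    have hd : ∀ v ∈ Set.Icc s u, HasDerivWithinAt z (b * (z v) ^ r - a) (Set.Icc s u) v :=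
      fun v hv => (hzd' v (hsubs hv)).mono hsubs
    have hm : ∀ v ∈ Set.Icc s u, (0:ℝ) ≤ b * (z v) ^ r - a := by
      intro v hv
      have := hstep (z v) (hzc v (hsubs hv)).le
      linarith
    have hM : ∀ v ∈ Set.Icc s u, b * (z v) ^ r - a ≤ b * K ^ r := by
      intro v hv
      have h1 : (z v) ^ r ≤ K ^ r :=
        Real.rpow_le_rpow (hc0.trans (hzc v (hsubs hv))).le (hKbd v (hsubs hv)) hrpos.le
      have := mul_le_mul_of_nonneg_left h1 hb.le
      linarith
    have := (mvt_two_sided hsu hd hm hM).1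
    linarith
  -- derivative of G = z ^ (-(1/φ))
  have hGd : ∀ u ∈ Set.Icc (0:ℝ) T,
      HasDerivWithinAt (fun v => (z v) ^ (-(1/φ)))
        (-(1/φ) * (b - a * (z u) ^ (-r))) (Set.Icc (0:ℝ) T) u := by
    intro u hu
    have hzu0 : 0 < z u := hc0.trans (hzc u hu)
    have h1 := (hzd' u hu).rpow_const (p := -(1/φ)) (Or.inl (ne_of_gt hzu0))
    have hexp : -(1/φ) - 1 = -r := by rw [hr]; ring
    have h2 : (z u) ^ (-r) * (z u) ^ r = 1 := by
      rw [← Real.rpow_add hzu0]; simp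
    have h3 : (b * (z u) ^ r - a) * (-(1/φ)) * (z u) ^ (-(1/φ) - 1)
        = -(1/φ) * (b - a * (z u) ^ (-r)) := by
      rw [hexp]
      linear_combination (-(1/φ) * b) * h2
    rw [← h3]
    exact h1
  have hcrneg : c ^ (-r) = b / a := by
    rw [Real.rpow_neg hc0.le, hcr, inv_div]
  have hz0rneg : z0 ^ (-r) = b / (2 * a) := by
    rw [Real.rpow_neg hz00.le, hz0r, inv_div]
  have hGub : ∀ u ∈ Set.Icc (0:ℝ) T, a * (z u) ^ (-r) ≤ b := by
    intro u hu
    have h1 : (z u) ^ (-r) ≤ c ^ (-r) :=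
      Real.rpow_le_rpow_of_nonpos hc0 (hzc u hu).le (by linarith)
    rw [hcrneg] at h1
    calc a * (z u) ^ (-r) ≤ a * (b / a) := mul_le_mul_of_nonneg_left h1 ha.le
    _ = b := by field_simp
  have hGpos : ∀ u ∈ Set.Icc (0:ℝ) T, 0 < a * (z u) ^ (-r) := by
    intro u hu
    exact mul_pos ha (Real.rpow_pos_of_pos (hc0.trans (hzc u hu)) _)
  -- main estimates
  intro t ht
  have hztpos : 0 < z t := hc0.trans (hzc t ht)
  have hyabs : |y t| = z t := abs_of_neg (hyneg t ht)
  rw [hyabs, show (-1 : ℝ)/φ = -(1/φ) from by ring]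
  obtain ⟨E, hEdef⟩ : ∃ x : ℝ, x = A ^ (-(1/φ)) + T - t := ⟨_, rfl⟩
  rw [← hEdef]
  have hArpos : 0 < A ^ (-(1/φ)) := Real.rpow_pos_of_pos hApos _
  have hE0 : 0 < E := by rw [hEdef]; have := ht.2; linarith
  have hEφ : 0 < E ^ φ := Real.rpow_pos_of_pos hE0 _
  have hsubt : Set.Icc t T ⊆ Set.Icc (0:ℝ) T := fun v hv => ⟨ht.1.trans hv.1, hv.2⟩
  have hdG : ∀ u ∈ Set.Icc t T, HasDerivWithinAt (fun v => (z v) ^ (-(1/φ)))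
      (-(1/φ) * (b - a * (z u) ^ (-r))) (Set.Icc t T) u :=
    fun u hu => (hGd u (hsubt hu)).mono hsubt
  have hmG : ∀ u ∈ Set.Icc t T, -(b/φ) ≤ -(1/φ) * (b - a * (z u) ^ (-r)) := by
    intro u hu
    have h1 := hGpos u (hsubt hu)
    have heq : -(1/φ) * (b - a * (z u) ^ (-r)) = -(b/φ) + (1/φ) * (a * (z u) ^ (-r)) := by
      ring
    rw [heq]
    have h2 : 0 ≤ (1/φ) * (a * (z u) ^ (-r)) := mul_nonneg (by positivity) h1.le
    linarith
  have hMG : ∀ u ∈ Set.Icc t T, -(1/φ) * (b - a * (z u) ^ (-r)) ≤ 0 := by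
    intro u hu
    have h2 := hGub u (hsubt hu)
    have h3 : 0 ≤ (1/φ) * (b - a * (z u) ^ (-r)) := mul_nonneg (by positivity) (by linarith)
    linarith
  have hGtpos : 0 < (z t) ^ (-(1/φ)) := Real.rpow_pos_of_pos hztpos _
  have hGinv : ((z t) ^ (-(1/φ))) ^ (-φ) = z t := by
    rw [← Real.rpow_mul hztpos.le, show (-(1/φ)) * (-φ) = 1 from by field_simp,
      Real.rpow_one]
  constructor
  · -- lower bound
    have hmvt := mvt_two_sided ht.2 hdG hmG hMG
    have h1 : -(b/φ) * (T - t) ≤ (z T) ^ (-(1/φ)) - (z t) ^ (-(1/φ)) := hmvt.1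
    rw [hzT] at h1
    have hβE : (z t) ^ (-(1/φ)) ≤ β * E := by
      have h3 : (b/φ) * (T - t) ≤ β * (T - t) :=
        mul_le_mul_of_nonneg_right hβb (by have := ht.2; linarith)
      have h4 : A ^ (-(1/φ)) ≤ β * A ^ (-(1/φ)) := le_mul_of_one_le_left hArpos.le hβ1
      have h5 : β * E = β * A ^ (-(1/φ)) + β * (T - t) := by rw [hEdef]; ring
      rw [h5]
      linarith
    have h5 : (β * E) ^ (-φ) ≤ ((z t) ^ (-(1/φ))) ^ (-φ) :=
      Real.rpow_le_rpow_of_nonpos hGtpos hβE (by linarith)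
    rw [hGinv] at h5
    have h7 : (β * E) ^ (-φ) = 1 / (β ^ φ * E ^ φ) := by
      rw [Real.rpow_neg (mul_nonneg hβ0.le hE0.le), Real.mul_rpow hβ0.le hE0.le, one_div]
    have h8 : 1 / (C * E ^ φ) ≤ 1 / (β ^ φ * E ^ φ) := by
      apply one_div_le_one_div_of_le (mul_pos (Real.rpow_pos_of_pos hβ0 _) hEφ)
      exact mul_le_mul_of_nonneg_right hCβ hEφ.le
    calc 1 / (C * E ^ φ) ≤ 1 / (β ^ φ * E ^ φ) := h8
    _ = (β * E) ^ (-φ) := h7.symm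
    _ ≤ z t := h5
  · -- upper bound
    rcases le_total (z t) z0 with hle | hge
    · have hEM : E ≤ M0 := by
        rw [hEdef, hM0def]
        have h1 : A ^ (-(1/φ)) ≤ c ^ (-(1/φ)) :=
          Real.rpow_le_rpow_of_nonpos hc0 hcA.le (by linarith)
        have := ht.1
        linarith
      have hEφM : E ^ φ ≤ M0 ^ φ := Real.rpow_le_rpow hE0.le hEM hφ0.le
      calc z t ≤ z0 := hle
      _ ≤ C / E ^ φ := by
        rw [le_div_iff₀ hEφ]
        calc z0 * E ^ φ ≤ z0 * M0 ^ φ := mul_le_mul_of_nonneg_left hEφM hz00.le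
        _ ≤ C := hCz0
    · have hMG2 : ∀ u ∈ Set.Icc t T,
          -(1/φ) * (b - a * (z u) ^ (-r)) ≤ -(b/(2*φ)) := by
        intro u hu
        have hzu : z0 ≤ z u := le_trans hge (hmono t ht u (hsubt hu) hu.1)
        have h1 : (z u) ^ (-r) ≤ z0 ^ (-r) :=
          Real.rpow_le_rpow_of_nonpos hz00 hzu (by linarith)
        rw [hz0rneg] at h1
        have h2 : a * (z u) ^ (-r) ≤ a * (b/(2*a)) := mul_le_mul_of_nonneg_left h1 ha.le
        have h3 : a * (b/(2*a)) = b/2 := by field_simp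
        rw [h3] at h2
        have h5 : (1/φ) * (b/2) ≤ (1/φ) * (b - a * (z u) ^ (-r)) :=
          mul_le_mul_of_nonneg_left (by linarith) (by positivity)
        have h6 : (1/φ) * (b/2) = b/(2*φ) := by ring
        linarith
      have hmvt2 := mvt_two_sided ht.2 hdG hmG hMG2
      have h1 : (z T) ^ (-(1/φ)) - (z t) ^ (-(1/φ)) ≤ -(b/(2*φ)) * (T - t) := hmvt2.2
      rw [hzT] at h1
      have hγE : γ * E ≤ (z t) ^ (-(1/φ)) := by
        have h2 : γ * (T - t) ≤ (b/(2*φ)) * (T - t) :=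
          mul_le_mul_of_nonneg_right hγb (by have := ht.2; linarith)
        have h3 : γ * A ^ (-(1/φ)) ≤ A ^ (-(1/φ)) := mul_le_of_le_one_left hArpos.le hγ1
        have h4 : γ * E = γ * A ^ (-(1/φ)) + γ * (T - t) := by rw [hEdef]; ring
        rw [h4]
        linarith
      have h5 : ((z t) ^ (-(1/φ))) ^ (-φ) ≤ (γ * E) ^ (-φ) :=
        Real.rpow_le_rpow_of_nonpos (mul_pos hγ0 hE0) hγE (by linarith)
      rw [hGinv] at h5
      have h7 : (γ * E) ^ (-φ) = (γ ^ φ)⁻¹ * (E ^ φ)⁻¹ := by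
        rw [Real.rpow_neg (mul_nonneg hγ0.le hE0.le), Real.mul_rpow hγ0.le hE0.le, mul_inv]
      calc z t ≤ (γ * E) ^ (-φ) := h5
      _ = (γ ^ φ)⁻¹ * (E ^ φ)⁻¹ := h7
      _ ≤ C * (E ^ φ)⁻¹ := mul_le_mul_of_nonneg_right hCγ (inv_nonneg.2 hEφ.le)
      _ = C / E ^ φ := by rw [div_eq_mul_inv]
end

section
/- Let r > 1, T > 0, a₁ ≥ a₂ > 0, 0 < b₁ ≤ b₂, and let A > 0 satisfy b₁A^r > a₁. Let y₁ be the unique solution of y'(t) = a₁ − b₁|y(t)|^r on [0,T] with y₁(T) = −A, and y₂ the unique solution of y'(t) = a₂ − b₂|y(t)|^r on [0,T] with y₂(T) = −A. Then −A ≤ y₁(t) ≤ y₂(t) ≤ −(a₂/b₂)^{1/r} for every t ∈ [0,T]. -/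
open Set Real

/-- MVT Lipschitz-type bound for rpow. -/
lemma rpow_lip (r M x y : ℝ) (hr : 1 ≤ r) (hx : 0 ≤ x) (hxy : x ≤ y) (hyM : y ≤ M) :
    y ^ r - x ^ r ≤ r * M ^ (r - 1) * (y - x) := by
  rcases eq_or_lt_of_le hxy with h | h
  · simp [h]
  · have hcont : ContinuousOn (fun z : ℝ => z ^ r) (Icc x y) := fun z _ =>
      (Real.continuousAt_rpow_const z r (Or.inr (by linarith))).continuousWithinAt
    obtain ⟨ξ, hξ, hslope⟩ := exists_hasDerivAt_eq_slope (fun z : ℝ => z ^ r)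
      (fun z => r * z ^ (r - 1)) h hcont
      (fun z _ => Real.hasDerivAt_rpow_const (Or.inr hr))
    have hξ0 : 0 ≤ ξ := le_trans hx hξ.1.le
    have hξM : ξ ≤ M := le_trans hξ.2.le hyM
    have hle : ξ ^ (r - 1) ≤ M ^ (r - 1) := Real.rpow_le_rpow hξ0 hξM (by linarith)
    have hyx : (0:ℝ) < y - x := by linarith
    have heq : y ^ r - x ^ r = r * ξ ^ (r - 1) * (y - x) := by
      field_simp at hslope
      linarith [hslope]
    rw [heq]
    exact mul_le_mul_of_nonneg_right
      (mul_le_mul_of_nonneg_left hle (by linarith)) hyx.le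

lemma rpow_lip_abs (r M x y : ℝ) (hr : 1 ≤ r) (hx : 0 ≤ x) (hy : 0 ≤ y)
    (hxM : x ≤ M) (hyM : y ≤ M) : x ^ r - y ^ r ≤ r * M ^ (r - 1) * |x - y| := by
  have hM : (0:ℝ) ≤ M := hx.trans hxM
  rcases le_total x y with h | h
  · have h1 : x ^ r ≤ y ^ r := Real.rpow_le_rpow hx h (by linarith)
    have h2 : (0:ℝ) ≤ r * M ^ (r-1) * |x - y| :=
      mul_nonneg (mul_nonneg (by linarith) (Real.rpow_nonneg hM _)) (abs_nonneg _)
    linarith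
  · have := rpow_lip r M y x hr hy h hxM
    rwa [abs_of_nonneg (by linarith)]

/-- Key backward-barrier lemma: if `w` has derivative `d` on `[0,T]`,
`d t ≥ -L * w t` wherever `w t > 0`, and `w T ≤ 0`, then `w ≤ 0` on `[0,T]`. -/
lemma key (T L : ℝ) (w d : ℝ → ℝ)
    (hw : ∀ t ∈ Icc (0:ℝ) T, HasDerivWithinAt w (d t) (Icc (0:ℝ) T) t)
    (hd : ∀ t ∈ Icc (0:ℝ) T, 0 < w t → -L * w t ≤ d t)
    (hwT : w T ≤ 0) : ∀ t ∈ Icc (0:ℝ) T, w t ≤ 0 := by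
  intro t₀ ht₀
  by_contra hpos
  push_neg at hpos
  have hT0 : (0:ℝ) ≤ T := ht₀.1.trans ht₀.2
  have hwc : ContinuousOn w (Icc 0 T) := fun t ht => (hw t ht).continuousWithinAt
  have ht₀T : t₀ < T := lt_of_le_of_ne ht₀.2 (by rintro rfl; linarith)
  have hsub : Icc t₀ T ⊆ Icc (0:ℝ) T := Icc_subset_Icc ht₀.1 le_rfl
  set S : Set ℝ := Icc t₀ T ∩ w ⁻¹' {0} with hS
  have hScl : IsClosed S :=
    (hwc.mono hsub).preimage_isClosed_of_isClosed isClosed_Icc isClosed_singleton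
  have hScomp : IsCompact S :=
    isCompact_Icc.of_isClosed_subset hScl inter_subset_left
  have hSne : S.Nonempty := by
    obtain ⟨u, hu, hwu⟩ := intermediate_value_Icc' ht₀.2 (hwc.mono hsub) ⟨hwT, hpos.le⟩
    exact ⟨u, hu, hwu⟩
  obtain ⟨s, hsS, hsmin⟩ := hScomp.exists_isLeast hSne
  have hws : w s = 0 := hsS.2
  have hst : t₀ ≤ s := hsS.1.1
  have hsT : s ≤ T := hsS.1.2
  have ht₀s : t₀ < s := lt_of_le_of_ne hst (by rintro rfl; linarith [hws])
  -- w > 0 on [t₀, s)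
  have hwpos : ∀ t ∈ Ico t₀ s, 0 < w t := by
    intro t ht
    by_contra hneg
    push_neg at hneg
    have htT : t ≤ T := ht.2.le.trans hsT
    obtain ⟨u, hu, hwu⟩ := intermediate_value_Icc' (le_refl t₀ |>.trans ht.1)
      (hwc.mono (Icc_subset_Icc ht₀.1 htT)) (⟨hneg, hpos.le⟩ : (0:ℝ) ∈ Icc (w t) (w t₀))
    have : s ≤ u := hsmin ⟨⟨hu.1, hu.2.trans htT⟩, hwu⟩
    linarith [hu.2, ht.2]
  -- the function g
  set g : ℝ → ℝ := fun t => w t * Real.exp (L * t) with hg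
  have hmono : MonotoneOn g (Icc t₀ s) := by
    apply monotoneOn_of_deriv_nonneg (convex_Icc _ _)
    · exact ((hwc.mono (Icc_subset_Icc ht₀.1 hsT)).mul ((Real.continuous_exp.comp
        (continuous_const.mul continuous_id)).continuousOn))
    · intro t ht
      rw [interior_Icc] at ht
      have htmem : t ∈ Icc (0:ℝ) T := ⟨ht₀.1.trans ht.1.le, ht.2.le.trans hsT⟩
      have hda : HasDerivAt w (d t) t :=
        (hw t htmem).hasDerivAt (Icc_mem_nhds (by linarith [ht.1, ht₀.1]) (by linarith [ht.2]))
      exact ((hda.mul ((Real.hasDerivAt_exp _).comp t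
        ((hasDerivAt_id t).const_mul L))).differentiableAt).differentiableWithinAt
    · intro t ht
      rw [interior_Icc] at ht
      have htmem : t ∈ Icc (0:ℝ) T := ⟨ht₀.1.trans ht.1.le, ht.2.le.trans hsT⟩
      have hda : HasDerivAt w (d t) t :=
        (hw t htmem).hasDerivAt (Icc_mem_nhds (by linarith [ht.1, ht₀.1]) (by linarith [ht.2]))
      have hgd : HasDerivAt g (d t * Real.exp (L * t) + w t * (Real.exp (L * t) * (L * 1))) t :=
        hda.mul ((Real.hasDerivAt_exp _).comp t ((hasDerivAt_id t).const_mul L))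
      rw [hgd.deriv]
      have hwt : 0 < w t := hwpos t ⟨ht.1.le, ht.2⟩
      have hdt : -L * w t ≤ d t := hd t htmem hwt
      have he : 0 < Real.exp (L * t) := Real.exp_pos _
      nlinarith
  have := hmono ⟨le_refl t₀, ht₀s.le⟩ ⟨ht₀s.le, le_refl s⟩ ht₀s.le
  have hgt₀ : 0 < w t₀ * Real.exp (L * t₀) := mul_pos hpos (Real.exp_pos _)
  simp only [hg, hws, zero_mul] at this
  linarith

/-- Barrier lemma: the solution stays below `-(a/b)^(1/r)`. -/
lemma barrier (r T a b A M : ℝ) (hr : 1 < r) (ha : 0 < a) (hb : 0 < b) (hA : 0 < A)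
    (hbA : a < b * A ^ r) (y : ℝ → ℝ)
    (hy : ∀ t ∈ Icc (0:ℝ) T, HasDerivWithinAt y (a - b * |y t| ^ r) (Icc (0:ℝ) T) t)
    (hyT : y T = -A) (hM : ∀ t ∈ Icc (0:ℝ) T, |y t| ≤ M) :
    ∀ t ∈ Icc (0:ℝ) T, y t ≤ -((a / b) ^ (1 / r)) := by
  have hr0 : (0:ℝ) < r := by linarith
  set c : ℝ := (a / b) ^ (1 / r) with hc
  have hab : (0:ℝ) ≤ a / b := div_nonneg ha.le hb.le
  have hc0 : 0 ≤ c := Real.rpow_nonneg hab _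
  have hcr : c ^ r = a / b := by
    rw [hc, one_div, Real.rpow_inv_rpow hab (ne_of_gt hr0)]
  have ha_eq : a = b * c ^ r := by rw [hcr]; field_simp
  have hcA : c ≤ A := by
    have h1 : a / b ≤ A ^ r := (div_le_iff₀ hb).2 (by linarith [hbA])
    calc c ≤ (A ^ r) ^ (1/r) := Real.rpow_le_rpow hab h1 (by positivity)
    _ = A := by rw [one_div, Real.rpow_rpow_inv hA.le (ne_of_gt hr0)]
  have hkey := key T (b * r * M ^ (r - 1)) (fun t => y t + c)
    (fun t => a - b * |y t| ^ r)
    (fun t ht => (hy t ht).add_const c)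
    (by
      intro t ht hpos
      have hMy := hM t ht
      have hM0 : (0:ℝ) ≤ M := (abs_nonneg _).trans hMy
      have hMr : (0:ℝ) ≤ M ^ (r - 1) := Real.rpow_nonneg hM0 _
      rcases le_or_gt (|y t|) c with hca | hca
      · have h1 : |y t| ^ r ≤ c ^ r := Real.rpow_le_rpow (abs_nonneg _) hca hr0.le
        have h2 : b * |y t| ^ r ≤ b * c ^ r := mul_le_mul_of_nonneg_left h1 hb.le
        have h3 : 0 ≤ b * r * M ^ (r-1) * (y t + c) :=
          mul_nonneg (mul_nonneg (mul_nonneg hb.le hr0.le) hMr) hpos.le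
        linarith
      · have hy0 : 0 < y t := by
          by_contra hneg
          push_neg at hneg
          have : |y t| = -(y t) := abs_of_nonpos hneg
          rw [this] at hca
          linarith
        have hay : |y t| = y t := abs_of_pos hy0
        rw [hay] at hMy ⊢
        have h1 := rpow_lip r M c (y t) hr.le hc0 (by linarith) hMy
        have h2 : r * M ^ (r-1) * (y t - c) ≤ r * M ^ (r-1) * (y t + c) :=
          mul_le_mul_of_nonneg_left (by linarith) (mul_nonneg hr0.le hMr)
        have h3 : b * (y t ^ r - c ^ r) ≤ b * (r * M ^ (r-1) * (y t + c)) :=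
          mul_le_mul_of_nonneg_left (h1.trans h2) hb.le
        nlinarith [h3])
    (by rw [hyT]; linarith)
  intro t ht
  have := hkey t ht
  linarith

/-- comparison of solutions of two terminal value problems. -/
theorem stmt_7 (r T a₁ a₂ b₁ b₂ A : ℝ) (hr : 1 < r) (hT : 0 < T)
    (ha₂ : 0 < a₂) (ha : a₂ ≤ a₁) (hb₁ : 0 < b₁) (hb : b₁ ≤ b₂)
    (hA : 0 < A) (hbA : a₁ < b₁ * A ^ r)
    (y₁ y₂ : ℝ → ℝ)
    (hy₁ : ∀ t ∈ Set.Icc (0:ℝ) T,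
      HasDerivWithinAt y₁ (a₁ - b₁ * |y₁ t| ^ r) (Set.Icc (0:ℝ) T) t)
    (hy₁T : y₁ T = -A)
    (hy₂ : ∀ t ∈ Set.Icc (0:ℝ) T,
      HasDerivWithinAt y₂ (a₂ - b₂ * |y₂ t| ^ r) (Set.Icc (0:ℝ) T) t)
    (hy₂T : y₂ T = -A) :
    ∀ t ∈ Set.Icc (0:ℝ) T,
      -A ≤ y₁ t ∧ y₁ t ≤ y₂ t ∧ y₂ t ≤ -((a₂ / b₂) ^ (1 / r)) := by
  have hr0 : (0:ℝ) < r := by linarith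
  have ha₁ : 0 < a₁ := lt_of_lt_of_le ha₂ ha
  have hb₂ : 0 < b₂ := lt_of_lt_of_le hb₁ hb
  have hAr : (0:ℝ) ≤ A ^ r := Real.rpow_nonneg hA.le _
  have hbA₂ : a₂ < b₂ * A ^ r :=
    lt_of_le_of_lt ha (hbA.trans_le (mul_le_mul_of_nonneg_right hb hAr))
  -- continuity and bounds
  have hc₁ : ContinuousOn y₁ (Icc 0 T) := fun t ht => (hy₁ t ht).continuousWithinAt
  have hc₂ : ContinuousOn y₂ (Icc 0 T) := fun t ht => (hy₂ t ht).continuousWithinAt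
  obtain ⟨M₁, hM₁⟩ := isCompact_Icc.exists_bound_of_continuousOn hc₁
  obtain ⟨M₂, hM₂⟩ := isCompact_Icc.exists_bound_of_continuousOn hc₂
  set M : ℝ := max M₁ M₂ with hM
  have hMy₁ : ∀ t ∈ Icc (0:ℝ) T, |y₁ t| ≤ M := fun t ht =>
    le_trans (by simpa [Real.norm_eq_abs] using hM₁ t ht) (le_max_left _ _)
  have hMy₂ : ∀ t ∈ Icc (0:ℝ) T, |y₂ t| ≤ M := fun t ht =>
    le_trans (by simpa [Real.norm_eq_abs] using hM₂ t ht) (le_max_right _ _)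
  have hTmem : T ∈ Icc (0:ℝ) T := ⟨hT.le, le_refl T⟩
  have hM0 : (0:ℝ) ≤ M := (abs_nonneg _).trans (hMy₁ T hTmem)
  have hMr : (0:ℝ) ≤ M ^ (r - 1) := Real.rpow_nonneg hM0 _
  -- barriers
  have hbar₁ := barrier r T a₁ b₁ A M hr ha₁ hb₁ hA hbA y₁ hy₁ hy₁T hMy₁
  have hbar₂ := barrier r T a₂ b₂ A M hr ha₂ hb₂ hA hbA₂ y₂ hy₂ hy₂T hMy₂
  -- comparison y₁ ≤ y₂
  have hcomp := key T (b₁ * r * M ^ (r - 1)) (fun t => y₁ t - y₂ t)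
    (fun t => (a₁ - b₁ * |y₁ t| ^ r) - (a₂ - b₂ * |y₂ t| ^ r))
    (fun t ht => (hy₁ t ht).sub (hy₂ t ht))
    (by
      intro t ht hpos
      have h1 : |y₁ t| ^ r - |y₂ t| ^ r ≤ r * M ^ (r-1) * abs (|y₁ t| - |y₂ t|) :=
        rpow_lip_abs r M (|y₁ t|) (|y₂ t|) hr.le (abs_nonneg _) (abs_nonneg _)
          (hMy₁ t ht) (hMy₂ t ht)
      have h2 : abs (|y₁ t| - |y₂ t|) ≤ |y₁ t - y₂ t| := abs_abs_sub_abs_le_abs_sub _ _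
      have h3 : |y₁ t - y₂ t| = y₁ t - y₂ t := abs_of_pos hpos
      rw [h3] at h2
      have h4 : r * M ^ (r-1) * abs (|y₁ t| - |y₂ t|) ≤ r * M ^ (r-1) * (y₁ t - y₂ t) :=
        mul_le_mul_of_nonneg_left h2 (mul_nonneg hr0.le hMr)
      have h5 : b₁ * (|y₁ t| ^ r - |y₂ t| ^ r) ≤ b₁ * (r * M ^ (r-1) * (y₁ t - y₂ t)) :=
        mul_le_mul_of_nonneg_left (h1.trans h4) hb₁.le
      have h6 : b₁ * |y₂ t| ^ r ≤ b₂ * |y₂ t| ^ r :=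
        mul_le_mul_of_nonneg_right hb (Real.rpow_nonneg (abs_nonneg _) _)
      nlinarith [h5, h6])
    (by simp [hy₁T, hy₂T])
  -- monotonicity of y₁ : antitone
  set c₁ : ℝ := (a₁ / b₁) ^ (1 / r) with hc₁def
  have hc₁0 : 0 ≤ c₁ := Real.rpow_nonneg (div_nonneg ha₁.le hb₁.le) _
  have hc₁r : c₁ ^ r = a₁ / b₁ := by
    rw [hc₁def, one_div, Real.rpow_inv_rpow (div_nonneg ha₁.le hb₁.le) (ne_of_gt hr0)]
  have hanti : AntitoneOn y₁ (Icc 0 T) := by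
    apply antitoneOn_of_deriv_nonpos (convex_Icc _ _) hc₁
    · intro t ht
      rw [interior_Icc] at ht
      exact ((hy₁ t ⟨ht.1.le, ht.2.le⟩).hasDerivAt
        (Icc_mem_nhds ht.1 ht.2)).differentiableAt.differentiableWithinAt
    · intro t ht
      rw [interior_Icc] at ht
      have htmem : t ∈ Icc (0:ℝ) T := ⟨ht.1.le, ht.2.le⟩
      have hda : HasDerivAt y₁ (a₁ - b₁ * |y₁ t| ^ r) t :=
        (hy₁ t htmem).hasDerivAt (Icc_mem_nhds ht.1 ht.2)
      rw [hda.deriv]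
      have hle : y₁ t ≤ -c₁ := hbar₁ t htmem
      have habs : c₁ ≤ |y₁ t| := by
        rw [abs_of_nonpos (by linarith)]; linarith
      have h1 : c₁ ^ r ≤ |y₁ t| ^ r := Real.rpow_le_rpow hc₁0 habs hr0.le
      rw [hc₁r] at h1
      have h2 : a₁ / b₁ * b₁ ≤ |y₁ t| ^ r * b₁ := mul_le_mul_of_nonneg_right h1 hb₁.le
      rw [div_mul_cancel₀ _ (ne_of_gt hb₁)] at h2
      linarith
  intro t ht
  refine ⟨?_, ?_, hbar₂ t ht⟩
  · have := hanti ht hTmem ht.2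
    rw [hy₁T] at this
    linarith
  · have := hcomp t ht
    linarith
end

section
/- Let T, φ, A, ℓ, κ̄ > 0 and q ∈ ℝ. Let z, κ : [0,T] → ℝ be measurable functions with 0 < κ(u) ≤ κ̄ for all u, with |z(u)|·(T − u + A^{−1/φ})^φ ≥ ℓ for all u ∈ [0,T], and such that u ↦ (|z(u)|/κ(u))^{1/φ} is integrable on [0,T]. Define Q(t) := q·exp(−∫_0^t (|z(u)|/κ(u))^{1/φ} du). Then for every t ∈ [0,T], |Q(t)| ≤ |q| · ((T − t + A^{−1/φ})/(T + A^{−1/φ}))^{(ℓ/κ̄)^{1/φ}}. -/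
/-- bound on the optimal inventory process
Q(t) = q exp(-∫_0^t (|z(u)|/κ(u))^{1/φ} du). -/
theorem stmt_12 (T φ A ℓ κmax q : ℝ) (hT : 0 < T) (hφ : 0 < φ) (hA : 0 < A)
    (hℓ : 0 < ℓ) (hκmax : 0 < κmax)
    (z κ : ℝ → ℝ) (hzm : Measurable z) (hκm : Measurable κ)
    (hκ : ∀ u, 0 < κ u ∧ κ u ≤ κmax)
    (hz : ∀ u ∈ Set.Icc (0:ℝ) T, ℓ ≤ |z u| * (T - u + A ^ (-1 / φ)) ^ φ)
    (hint : IntervalIntegrable (fun u => (|z u| / κ u) ^ (1 / φ))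
      MeasureTheory.volume 0 T) :
    ∀ t ∈ Set.Icc (0:ℝ) T,
      |q * Real.exp (-(∫ u in (0:ℝ)..t, (|z u| / κ u) ^ (1 / φ)))| ≤
        |q| * ((T - t + A ^ (-1 / φ)) / (T + A ^ (-1 / φ))) ^
          ((ℓ / κmax) ^ (1 / φ)) := by
  intro t ht
  obtain ⟨ht0, htT⟩ := ht
  set a := A ^ (-1 / φ) with ha_def
  have ha : 0 < a := Real.rpow_pos_of_pos hA _
  set c := (ℓ / κmax) ^ (1 / φ) with hc_def
  have hc : 0 < c := Real.rpow_pos_of_pos (div_pos hℓ hκmax) _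
  have hdt : 0 < T - t + a := by linarith
  have hdT : 0 < T + a := by linarith
  -- pointwise bound
  have hpt : ∀ u ∈ Set.Icc (0:ℝ) t, c / (T - u + a) ≤ (|z u| / κ u) ^ (1 / φ) := by
    intro u hu
    have hu0 := hu.1
    have hut : u ≤ T := hu.2.trans htT
    have hy : 0 < T - u + a := by linarith
    have hyφ : 0 < (T - u + a) ^ φ := Real.rpow_pos_of_pos hy φ
    have hzu := hz u ⟨hu0, hut⟩
    have hκu := hκ u
    have h2 : ℓ / (κmax * (T - u + a) ^ φ) ≤ |z u| / κ u := by
      rw [div_le_div_iff₀ (by positivity) hκu.1]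
      nlinarith [mul_le_mul_of_nonneg_left hκu.2 hℓ.le,
        mul_le_mul_of_nonneg_right hzu hκmax.le]
    have h3 : (ℓ / (κmax * (T - u + a) ^ φ)) ^ (1 / φ) ≤ (|z u| / κ u) ^ (1 / φ) :=
      Real.rpow_le_rpow (by positivity) h2 (by positivity)
    have h4 : (ℓ / (κmax * (T - u + a) ^ φ)) ^ (1 / φ) = c / (T - u + a) := by
      have he : ℓ / (κmax * (T - u + a) ^ φ) = (ℓ / κmax) / (T - u + a) ^ φ := by
        field_simp
      rw [he, Real.div_rpow (div_pos hℓ hκmax).le hyφ.le, ← Real.rpow_mul hy.le,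
        mul_one_div_cancel hφ.ne', Real.rpow_one]
    rw [← h4]; exact h3
  -- integrability
  have hgint : IntervalIntegrable (fun u => c / (T - u + a))
      MeasureTheory.volume 0 t := by
    apply ContinuousOn.intervalIntegrable
    apply ContinuousOn.div continuousOn_const
    · exact (by fun_prop : Continuous fun u : ℝ => T - u + a).continuousOn
    · intro x hx
      rw [Set.uIcc_of_le ht0] at hx
      have : x ≤ T := hx.2.trans htT
      have : 0 < T - x + a := by linarith [hx.1]
      linarith
  have hfint : IntervalIntegrable (fun u => (|z u| / κ u) ^ (1 / φ))
      MeasureTheory.volume 0 t := by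
    apply hint.mono_set
    rw [Set.uIcc_of_le ht0, Set.uIcc_of_le (ht0.trans htT)]
    exact Set.Icc_subset_Icc le_rfl htT
  -- integral comparison
  have hmono : (∫ u in (0:ℝ)..t, c / (T - u + a)) ≤
      ∫ u in (0:ℝ)..t, (|z u| / κ u) ^ (1 / φ) :=
    intervalIntegral.integral_mono_on ht0 hgint hfint hpt
  -- compute the lower integral
  have hI : (∫ u in (0:ℝ)..t, c / (T - u + a)) =
      c * Real.log ((T + a) / (T + a - t)) := by
    have h1 : (∫ u in (0:ℝ)..t, c / (T - u + a)) =
        c * ∫ u in (0:ℝ)..t, ((T + a) - u)⁻¹ := by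
      rw [← intervalIntegral.integral_const_mul]
      apply intervalIntegral.integral_congr
      intro u _
      show c / (T - u + a) = c * (T + a - u)⁻¹
      rw [div_eq_mul_inv]
      ring_nf
    have h2 : (∫ u in (0:ℝ)..t, ((T + a) - u)⁻¹) =
        ∫ x in (T + a - t)..(T + a - 0), x⁻¹ :=
      intervalIntegral.integral_comp_sub_left (fun x => x⁻¹) (T + a)
    have hpos : 0 < T + a - t := by linarith
    have h3 : (∫ x in (T + a - t)..(T + a - 0), x⁻¹) =
        Real.log ((T + a - 0) / (T + a - t)) := by
      apply integral_inv
      rw [Set.uIcc_of_le (by linarith)]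
      intro h
      exact absurd h.1 (by linarith)
    rw [h1, h2, h3]
    norm_num
  -- conclude
  have hexp : Real.exp (-(∫ u in (0:ℝ)..t, (|z u| / κ u) ^ (1 / φ))) ≤
      ((T - t + a) / (T + a)) ^ c := by
    have hr : ((T - t + a) / (T + a)) ^ c =
        Real.exp (-(c * Real.log ((T + a) / (T + a - t)))) := by
      rw [Real.rpow_def_of_pos (div_pos hdt hdT),
        Real.log_div hdt.ne' hdT.ne', Real.log_div hdT.ne' (by linarith : T + a - t ≠ 0)]
      have : T + a - t = T - t + a := by ring
      rw [this]
      ring_nf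
    rw [hr]
    exact Real.exp_le_exp.mpr (by linarith [hI ▸ hmono])
  rw [abs_mul, abs_of_pos (Real.exp_pos _)]
  exact mul_le_mul_of_nonneg_left hexp (abs_nonneg q)
end

section
/- Let a, b > 0, r > 1, T > 0, and for each A > (a/b)^{1/r} let y_A be the unique solution of the terminal value problem y'(t) = a − b|y(t)|^r on [0,T], y(T) = −A. Then for every t ∈ [0,T) the limit y_∞(t) := lim_{A→∞} y_A(t) exists and is a finite real number (the family y_A(t) is decreasing in A), and there exists a constant C ≥ 1, independent of t, such that 1/(C(T−t)^{1/(r−1)}) ≤ |y_∞(t)| ≤ C/((T−t)^{1/(r−1)}) for all t ∈ [0,T). -/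
open Set Filter Real Topology

lemma my_mono_aux {f f' : ℝ → ℝ} {c d : ℝ}
    (hf : ∀ x ∈ Icc c d, HasDerivWithinAt f (f' x) (Icc c d) x)
    (h0 : ∀ x ∈ Ioo c d, 0 ≤ f' x) : MonotoneOn f (Icc c d) := by
  apply monotoneOn_of_hasDerivWithinAt_nonneg (convex_Icc c d)
    (fun x hx => (hf x hx).continuousWithinAt)
    (f' := f')
  · intro x hx
    rw [interior_Icc] at hx
    exact ((hf x (Ioo_subset_Icc_self hx)).mono interior_subset)
  · intro x hx; rw [interior_Icc] at hx; exact h0 x hx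

lemma my_anti_aux {f f' : ℝ → ℝ} {c d : ℝ}
    (hf : ∀ x ∈ Icc c d, HasDerivWithinAt f (f' x) (Icc c d) x)
    (h0 : ∀ x ∈ Ioo c d, f' x ≤ 0) : AntitoneOn f (Icc c d) := by
  apply antitoneOn_of_hasDerivWithinAt_nonpos (convex_Icc c d)
    (fun x hx => (hf x hx).continuousWithinAt)
    (f' := f')
  · intro x hx
    rw [interior_Icc] at hx
    exact ((hf x (Ioo_subset_Icc_self hx)).mono interior_subset)
  · intro x hx; rw [interior_Icc] at hx; exact h0 x hx

lemma my_rpow_gap {r : ℝ} (hr : 1 < r) {x y Z : ℝ} (hx : 0 < x) (hxy : x ≤ y) (hyZ : y ≤ Z) :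
    y ^ r - x ^ r ≤ r * Z ^ (r - 1) * (y - x) := by
  have hy : 0 < y := lt_of_lt_of_le hx hxy
  have key : MonotoneOn (fun s : ℝ => r * Z ^ (r-1) * s - s ^ r) (Icc x Z) := by
    apply my_mono_aux (f' := fun s => r * Z ^ (r-1) - r * s ^ (r-1))
    · intro s hs
      have hs0 : (0:ℝ) < s := lt_of_lt_of_le hx hs.1
      have h1 : HasDerivAt (fun s : ℝ => s ^ r) (r * s ^ (r-1)) s :=
        Real.hasDerivAt_rpow_const (Or.inl hs0.ne')
      have h2 : HasDerivAt (fun s : ℝ => r * Z ^ (r-1) * s - s ^ r)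
          (r * Z ^ (r-1) - r * s ^ (r-1)) s := by
        exact (((hasDerivAt_id s).const_mul (r * Z ^ (r-1))).sub h1).congr_deriv (by ring)
      exact h2.hasDerivWithinAt
    · intro s hs
      have hs0 : (0:ℝ) < s := lt_of_lt_of_le hx hs.1.le
      have : s ^ (r-1) ≤ Z ^ (r-1) :=
        Real.rpow_le_rpow hs0.le hs.2.le (by linarith)
      nlinarith [hs0.le]
  have := key ⟨le_rfl, hxy.trans hyZ⟩ ⟨hxy, hyZ⟩ hxy
  simp only at this
  nlinarith

/-- Key step: solutions stay below `-z0`. -/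
lemma my_key (a b r T : ℝ) (ha : 0 < a) (hb : 0 < b) (hr : 1 < r) (hT : 0 < T)
    (y : ℝ → ℝ)
    (hd : ∀ t ∈ Set.Icc (0:ℝ) T,
        HasDerivWithinAt y (a - b * |y t| ^ r) (Set.Icc (0:ℝ) T) t)
    {A : ℝ} (hA : (a / b) ^ (1 / r) < A) (hterm : y T = -A) :
    ∀ t ∈ Set.Icc (0:ℝ) T, y t < -((a / b) ^ (1 / r)) := by
  set z0 : ℝ := (a / b) ^ (1 / r) with hz0def
  have hab : (0:ℝ) < a / b := div_pos ha hb
  have hz0 : 0 < z0 := Real.rpow_pos_of_pos hab _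
  have hz0r : z0 ^ r = a / b := by
    rw [hz0def, ← Real.rpow_mul hab.le, one_div, inv_mul_cancel₀ (by positivity : r ≠ 0),
      Real.rpow_one]
  have hcont : ContinuousOn y (Icc 0 T) := fun s hs => (hd s hs).continuousWithinAt
  by_contra hcon
  push_neg at hcon
  obtain ⟨t1, ht1, hge⟩ := hcon
  set S : Set ℝ := Icc t1 T ∩ y ⁻¹' (Ici (-z0)) with hSdef
  have hSclosed : IsClosed S :=
    (hcont.mono (Icc_subset_Icc ht1.1 le_rfl)).preimage_isClosed_of_isClosed
      isClosed_Icc isClosed_Ici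
  have hSne : S.Nonempty := ⟨t1, ⟨le_rfl, ht1.2⟩, hge⟩
  have hSbdd : BddAbove S := BddAbove.mono inter_subset_left bddAbove_Icc
  set t2 : ℝ := sSup S with ht2def
  have ht2S : t2 ∈ S := hSclosed.csSup_mem hSne hSbdd
  have ht2Icc : t2 ∈ Icc t1 T := ht2S.1
  have ht20 : (0:ℝ) ≤ t2 := le_trans ht1.1 ht2Icc.1
  have hyt2 : -z0 ≤ y t2 := ht2S.2
  have ht2T : t2 < T := by
    rcases eq_or_lt_of_le ht2Icc.2 with h | h
    · exfalso; rw [h, hterm] at hyt2; linarith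
    · exact h
  have hbetween : ∀ s, t2 < s → s ≤ T → y s < -z0 := by
    intro s hs hsT
    by_contra h
    push_neg at h
    have hsS : s ∈ S := ⟨⟨le_trans ht2Icc.1 hs.le, hsT⟩, h⟩
    exact absurd (le_csSup hSbdd hsS) (not_le.mpr hs)
  -- y t2 = -z0
  have hyt2eq : y t2 = -z0 := by
    refine le_antisymm ?_ hyt2
    have hne : (𝓝[Ioo t2 T] t2).NeBot := by
      rw [← mem_closure_iff_nhdsWithin_neBot, closure_Ioo ht2T.ne]
      exact ⟨le_rfl, ht2T.le⟩
    have hcw : ContinuousWithinAt y (Ioo t2 T) t2 :=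
      (hcont t2 ⟨ht20, ht2Icc.2⟩).mono
        (fun s hs => ⟨le_trans ht20 hs.1.le, hs.2.le⟩)
    refine le_of_tendsto hcw ?_
    filter_upwards [self_mem_nhdsWithin] with s hs
    exact (hbetween s hs.1 hs.2.le).le
  have hyle : ∀ s ∈ Icc t2 T, y s ≤ -z0 := by
    intro s hs
    rcases eq_or_lt_of_le hs.1 with h | h
    · rw [← h]; exact hyt2eq.le
    · exact (hbetween s h hs.2).le
  have hsub : Icc t2 T ⊆ Icc 0 T := Icc_subset_Icc ht20 le_rfl
  have habs : ∀ s ∈ Icc t2 T, |y s| = -y s :=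
    fun s hs => abs_of_neg (lt_of_le_of_lt (hyle s hs) (by linarith))
  -- max of -y on [t2,T]
  obtain ⟨m, hm, hmax⟩ := IsCompact.exists_isMaxOn isCompact_Icc
    ⟨T, ht2T.le, le_rfl⟩ ((hcont.mono hsub).neg)
  set Z : ℝ := -y m with hZdef
  have hZbound : ∀ s ∈ Icc t2 T, -y s ≤ Z := fun s hs => hmax hs
  have hz0Z : z0 < Z := by
    have := hZbound T ⟨ht2T.le, le_rfl⟩
    rw [hterm] at this; linarith
  set v : ℝ → ℝ := fun s => -y s - z0 with hvdef
  have hvd : ∀ s ∈ Icc t2 T, HasDerivWithinAt v (b * (-y s) ^ r - a) (Icc t2 T) s := by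
    intro s hs
    have h0 := (((hd s (hsub hs)).mono hsub).neg).sub_const z0
    exact h0.congr_deriv (by rw [habs s hs]; ring)
  set L : ℝ := b * (r * Z ^ (r - 1)) with hLdef
  set w : ℝ → ℝ := fun s => Real.exp (-(L * s)) * v s with hwdef
  have hwd : ∀ s ∈ Icc t2 T, HasDerivWithinAt w
      (Real.exp (-(L * s)) * ((b * (-y s) ^ r - a) - L * v s)) (Icc t2 T) s := by
    intro s hs
    have h1 : HasDerivAt (fun u : ℝ => -(L * u)) (-L) s := by
      exact ((hasDerivAt_id s).const_mul L).neg.congr_deriv (by ring)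
    have he : HasDerivAt (fun u : ℝ => Real.exp (-(L * u)))
        (Real.exp (-(L * s)) * (-L)) s := (Real.hasDerivAt_exp _).comp s h1
    have := (he.hasDerivWithinAt).mul (hvd s hs)
    exact this.congr_deriv (by ring)
  have hwa : AntitoneOn w (Icc t2 T) := by
    apply my_anti_aux hwd
    intro s hs
    have hs' : s ∈ Icc t2 T := Ioo_subset_Icc_self hs
    have h1 : z0 < -y s := by have := hbetween s hs.1 hs.2.le; linarith
    have h2 : -y s ≤ Z := hZbound s hs'
    have hgap : (-y s) ^ r - z0 ^ r ≤ r * Z ^ (r-1) * ((-y s) - z0) :=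
      my_rpow_gap hr hz0 h1.le h2
    have ha' : a = b * z0 ^ r := by rw [hz0r]; field_simp
    have hvs : v s = -y s - z0 := rfl
    have : (b * (-y s) ^ r - a) - L * v s ≤ 0 := by
      rw [hvs, ha', hLdef]
      nlinarith
    exact mul_nonpos_of_nonneg_of_nonpos (Real.exp_nonneg _) this
  have hfin := hwa (left_mem_Icc.mpr ht2T.le) (right_mem_Icc.mpr ht2T.le) ht2T.le
  have hv2 : v t2 = 0 := by rw [hvdef]; simp [hyt2eq]
  have hvT : v T = A - z0 := by rw [hvdef]; simp [hterm]
  rw [hwdef] at hfin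
  simp only [hv2, hvT, mul_zero] at hfin
  nlinarith [Real.exp_pos (-(L * T))]

/-- Comparison: solution with smaller terminal value stays below. -/
lemma my_comp (a b r T : ℝ) (ha : 0 < a) (hb : 0 < b) (hr : 1 < r) (hT : 0 < T)
    (y1 y2 : ℝ → ℝ)
    (hd1 : ∀ t ∈ Set.Icc (0:ℝ) T,
        HasDerivWithinAt y1 (a - b * |y1 t| ^ r) (Set.Icc (0:ℝ) T) t)
    (hd2 : ∀ t ∈ Set.Icc (0:ℝ) T,
        HasDerivWithinAt y2 (a - b * |y2 t| ^ r) (Set.Icc (0:ℝ) T) t)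
    (hk1 : ∀ t ∈ Set.Icc (0:ℝ) T, y1 t < -((a / b) ^ (1 / r)))
    (hk2 : ∀ t ∈ Set.Icc (0:ℝ) T, y2 t < -((a / b) ^ (1 / r)))
    (hterm : y2 T ≤ y1 T) :
    ∀ t ∈ Set.Icc (0:ℝ) T, y2 t ≤ y1 t := by
  set z0 : ℝ := (a / b) ^ (1 / r) with hz0def
  have hz0 : 0 < z0 := Real.rpow_pos_of_pos (div_pos ha hb) _
  by_contra hcon
  push_neg at hcon
  obtain ⟨t0, ht0, hgt⟩ := hcon
  set d : ℝ → ℝ := fun s => y2 s - y1 s with hddef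
  have hdcont : ContinuousOn d (Icc 0 T) := fun s hs =>
    ((hd2 s hs).continuousWithinAt).sub ((hd1 s hs).continuousWithinAt)
  set S : Set ℝ := Icc t0 T ∩ d ⁻¹' (Iic 0) with hSdef
  have hSclosed : IsClosed S :=
    (hdcont.mono (Icc_subset_Icc ht0.1 le_rfl)).preimage_isClosed_of_isClosed
      isClosed_Icc isClosed_Iic
  have hSne : S.Nonempty := ⟨T, ⟨ht0.2, le_rfl⟩, by simp [hddef, sub_nonpos.mpr hterm]⟩
  have hSbdd : BddBelow S := BddBelow.mono inter_subset_left bddBelow_Icc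
  set t3 : ℝ := sInf S with ht3def
  have ht3S : t3 ∈ S := hSclosed.csInf_mem hSne hSbdd
  have ht3Icc : t3 ∈ Icc t0 T := ht3S.1
  have hd3 : d t3 ≤ 0 := ht3S.2
  have ht03 : t0 < t3 := by
    rcases eq_or_lt_of_le ht3Icc.1 with h | h
    · exfalso; rw [← h] at hd3; simp only [hddef] at hd3; linarith
    · exact h
  have hbetween : ∀ s, t0 ≤ s → s < t3 → 0 < d s := by
    intro s hs hsT
    by_contra h
    push_neg at h
    have hsS : s ∈ S := ⟨⟨hs, le_trans hsT.le ht3Icc.2⟩, h⟩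
    exact absurd (csInf_le hSbdd hsS) (not_le.mpr hsT)
  have hsub : Icc t0 t3 ⊆ Icc 0 T := Icc_subset_Icc ht0.1 ht3Icc.2
  have hmono : MonotoneOn d (Icc t0 t3) := by
    apply my_mono_aux
      (f' := fun s => (a - b * |y2 s| ^ r) - (a - b * |y1 s| ^ r))
    · intro s hs
      exact ((hd2 s (hsub hs)).mono hsub).sub ((hd1 s (hsub hs)).mono hsub)
    · intro s hs
      have hs' : s ∈ Icc 0 T := hsub (Ioo_subset_Icc_self hs)
      have h1 : y1 s < -z0 := hk1 s hs'
      have h2 : y2 s < -z0 := hk2 s hs'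
      have hds : 0 < d s := hbetween s hs.1.le hs.2
      have hy12 : y1 s < y2 s := by simp only [hddef] at hds; linarith
      have habs1 : |y1 s| = -y1 s := abs_of_neg (by linarith)
      have habs2 : |y2 s| = -y2 s := abs_of_neg (by linarith)
      have : |y2 s| ^ r ≤ |y1 s| ^ r := by
        rw [habs1, habs2]
        exact Real.rpow_le_rpow (by linarith) (by linarith) (by linarith)
      nlinarith
  have := hmono (left_mem_Icc.mpr ht03.le) (right_mem_Icc.mpr ht03.le) ht03.le
  have h0 : 0 < d t0 := by simp only [hddef]; linarith
  linarith

/-- Bounds for a single solution, in terms of `u = z^{1-r}`. -/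
lemma my_bounds (a b r T : ℝ) (ha : 0 < a) (hb : 0 < b) (hr : 1 < r) (hT : 0 < T)
    (y : ℝ → ℝ)
    (hd : ∀ t ∈ Set.Icc (0:ℝ) T,
        HasDerivWithinAt y (a - b * |y t| ^ r) (Set.Icc (0:ℝ) T) t)
    (hk : ∀ t ∈ Set.Icc (0:ℝ) T, y t < -((a / b) ^ (1 / r)))
    {A : ℝ} (hA : (a / b) ^ (1 / r) < A) (hterm : y T = -A) :
    ∀ t ∈ Set.Icc (0:ℝ) T,
      ((-y t) ^ (1 - r) ≤ A ^ (1 - r) + ((r - 1) * b) * (T - t)) ∧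
      ((2 * a / b) ^ (1 / r) ≤ -y t →
        ((r - 1) * (b / 2)) * (T - t) ≤ (-y t) ^ (1 - r)) := by
  set z0 : ℝ := (a / b) ^ (1 / r) with hz0def
  have hab : (0:ℝ) < a / b := div_pos ha hb
  have hz0 : 0 < z0 := Real.rpow_pos_of_pos hab _
  have hz0r : z0 ^ r = a / b := by
    rw [hz0def, ← Real.rpow_mul hab.le, one_div, inv_mul_cancel₀ (by positivity : r ≠ 0),
      Real.rpow_one]
  have hzpos : ∀ s ∈ Icc (0:ℝ) T, z0 < -y s := by
    intro s hs; have := hk s hs; linarith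
  -- derivative of z = -y
  have hzd : ∀ s ∈ Icc (0:ℝ) T,
      HasDerivWithinAt (fun s => -y s) (b * (-y s) ^ r - a) (Icc (0:ℝ) T) s := by
    intro s hs
    have h0 := (hd s hs).neg
    exact h0.congr_deriv (by rw [abs_of_neg (by have := hk s hs; linarith : y s < 0)]; ring)
  -- derivative of u = z^(1-r)
  have hud : ∀ s ∈ Icc (0:ℝ) T,
      HasDerivWithinAt (fun s => (-y s) ^ (1 - r))
        ((1 - r) * (-y s) ^ (-r) * (b * (-y s) ^ r - a)) (Icc (0:ℝ) T) s := by
    intro s hs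
    have hz : (0:ℝ) < -y s := lt_trans hz0 (hzpos s hs)
    have houter : HasDerivAt (fun x : ℝ => x ^ (1 - r)) ((1 - r) * (-y s) ^ (-r)) (-y s) := by
      have := Real.hasDerivAt_rpow_const (x := -y s) (p := 1 - r) (Or.inl hz.ne')
      convert this using 2
      ring_nf
    exact houter.comp_hasDerivWithinAt s (hzd s hs)
  -- monotonicity of z
  have hzmono : MonotoneOn (fun s => -y s) (Icc (0:ℝ) T) := by
    apply my_mono_aux (f' := fun s => b * (-y s) ^ r - a)
      (fun s hs => hzd s hs)
    intro s hs
    have h1 : z0 < -y s := hzpos s (Ioo_subset_Icc_self hs)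
    have h2 : z0 ^ r < (-y s) ^ r := Real.rpow_lt_rpow hz0.le h1 (by linarith)
    rw [hz0r] at h2
    have : a < b * (-y s) ^ r := by
      rw [div_lt_iff₀ hb] at h2; linarith [h2]
    linarith
  intro t ht
  constructor
  · -- part 1
    have hmono : MonotoneOn (fun s => (-y s) ^ (1 - r) + ((r - 1) * b) * s) (Icc (0:ℝ) T) := by
      apply my_mono_aux
        (f' := fun s => (1 - r) * (-y s) ^ (-r) * (b * (-y s) ^ r - a) + (r - 1) * b)
      · intro s hs
        exact ((hud s hs).add (((hasDerivAt_id s).const_mul ((r-1)*b)).hasDerivWithinAt)).congr_deriv (by ring)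
      · intro s hs
        have hz : (0:ℝ) < -y s := lt_trans hz0 (hzpos s (Ioo_subset_Icc_self hs))
        have hzr : (0:ℝ) < (-y s) ^ r := Real.rpow_pos_of_pos hz r
        have hinv : (-y s) ^ (-r) = ((-y s) ^ r)⁻¹ := Real.rpow_neg hz.le r
        rw [hinv]
        have h2 : (0:ℝ) < ((-y s) ^ r)⁻¹ := inv_pos.mpr hzr
        have hkey : (1 - r) * ((-y s) ^ r)⁻¹ * (b * (-y s) ^ r - a) + (r - 1) * b
            = (r - 1) * a * ((-y s) ^ r)⁻¹ := by
          field_simp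
          ring
        rw [hkey]
        exact (mul_pos (mul_pos (by linarith : (0:ℝ) < r - 1) ha) h2).le
    have := hmono ht ⟨hT.le, le_rfl⟩ ht.2
    simp only [hterm, neg_neg] at this
    linarith
  · -- part 2
    intro hM
    set M : ℝ := (2 * a / b) ^ (1 / r) with hMdef
    have hab2 : (0:ℝ) < 2 * a / b := by positivity
    have hMr : M ^ r = 2 * a / b := by
      rw [hMdef, ← Real.rpow_mul hab2.le, one_div, inv_mul_cancel₀ (by positivity : r ≠ 0),
        Real.rpow_one]
    have hM0 : 0 < M := Real.rpow_pos_of_pos hab2 _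
    have hsub : Icc t T ⊆ Icc (0:ℝ) T := Icc_subset_Icc ht.1 le_rfl
    have hMs : ∀ s ∈ Icc t T, M ≤ -y s := by
      intro s hs
      exact le_trans hM (hzmono ht (hsub hs) hs.1)
    have hanti : AntitoneOn (fun s => (-y s) ^ (1 - r) + ((r - 1) * (b / 2)) * s) (Icc t T) := by
      apply my_anti_aux
        (f' := fun s => (1 - r) * (-y s) ^ (-r) * (b * (-y s) ^ r - a) + (r - 1) * (b / 2))
      · intro s hs
        exact (((hud s (hsub hs)).mono hsub).add
          (((hasDerivAt_id s).const_mul ((r-1)*(b/2))).hasDerivWithinAt)).congr_deriv (by ring)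
      · intro s hs
        have hs' : s ∈ Icc t T := Ioo_subset_Icc_self hs
        have hz : (0:ℝ) < -y s := lt_trans hz0 (hzpos s (hsub hs'))
        have hzr : (0:ℝ) < (-y s) ^ r := Real.rpow_pos_of_pos hz r
        have hMrle : M ^ r ≤ (-y s) ^ r := Real.rpow_le_rpow hM0.le (hMs s hs') (by linarith)
        rw [hMr] at hMrle
        -- so a / (-y s)^r ≤ b/2  i.e.  2*a ≤ b * (-y s)^r
        have h2a : 2 * a ≤ b * (-y s) ^ r := by
          rw [div_le_iff₀ hb] at hMrle; linarith
        have hinv : (-y s) ^ (-r) = ((-y s) ^ r)⁻¹ := Real.rpow_neg hz.le r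
        rw [hinv]
        have h1 : ((-y s) ^ r)⁻¹ * ((-y s) ^ r) = 1 := inv_mul_cancel₀ hzr.ne'
        have h2 : (0:ℝ) < ((-y s) ^ r)⁻¹ := inv_pos.mpr hzr
        have hkey : (1 - r) * ((-y s) ^ r)⁻¹ * (b * (-y s) ^ r - a) + (r - 1) * (b / 2)
            = (r - 1) * (a * ((-y s) ^ r)⁻¹ - b / 2) := by
          field_simp
          ring
        rw [hkey]
        have h3 := mul_le_mul_of_nonneg_right h2a h2.le
        nlinarith
    have htT : t ≤ T := ht.2
    have := hanti (left_mem_Icc.mpr htT) (right_mem_Icc.mpr htT) htT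
    simp only [hterm, neg_neg] at this
    have hAnn : (0:ℝ) ≤ A ^ (1 - r) := Real.rpow_nonneg (by linarith) _
    linarith

lemma my_conv1 {r : ℝ} (hr : 1 < r) {x β : ℝ} (hx : 0 < x) (hβ : 0 < β)
    (h : β ≤ x ^ (1 - r)) : x ≤ β ^ (1/(1-r)) := by
  have hexp : (1:ℝ)/(1-r) ≤ 0 := by
    apply div_nonpos_of_nonneg_of_nonpos <;> linarith
  have h2 := Real.rpow_le_rpow_of_nonpos hβ h hexp
  rwa [← Real.rpow_mul hx.le, mul_one_div, div_self (by linarith : (1:ℝ)-r ≠ 0),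
    Real.rpow_one] at h2

lemma my_conv2 {r : ℝ} (hr : 1 < r) {x β : ℝ} (hx : 0 < x) (hβ : 0 < β)
    (h : x ^ (1 - r) ≤ β) : β ^ (1/(1-r)) ≤ x := by
  have hexp : (1:ℝ)/(1-r) ≤ 0 := by
    apply div_nonpos_of_nonneg_of_nonpos <;> linarith
  have h2 := Real.rpow_le_rpow_of_nonpos (Real.rpow_pos_of_pos hx (1-r)) h hexp
  rwa [← Real.rpow_mul hx.le, mul_one_div, div_self (by linarith : (1:ℝ)-r ≠ 0),
    Real.rpow_one] at h2

/-- existence of the pointwise singular limit y_∞ of the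
solutions y_A as A → ∞ (monotone decreasing in A), together with two-sided
blow-up bounds for |y_∞|. -/
theorem stmt_18 (a b r T : ℝ) (ha : 0 < a) (hb : 0 < b) (hr : 1 < r)
    (hT : 0 < T)
    (Y : ℝ → ℝ → ℝ)
    (hY : ∀ A : ℝ, (a / b) ^ (1 / r) < A →
      (∀ t ∈ Set.Icc (0:ℝ) T,
        HasDerivWithinAt (Y A) (a - b * |Y A t| ^ r) (Set.Icc (0:ℝ) T) t) ∧
      Y A T = -A) :
    (∀ t ∈ Set.Ico (0:ℝ) T, ∀ A A' : ℝ,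
      (a / b) ^ (1 / r) < A → A ≤ A' → Y A' t ≤ Y A t) ∧
    ∃ yinf : ℝ → ℝ,
      (∀ t ∈ Set.Ico (0:ℝ) T,
        Filter.Tendsto (fun A => Y A t) Filter.atTop (nhds (yinf t))) ∧
      ∃ C : ℝ, 1 ≤ C ∧ ∀ t ∈ Set.Ico (0:ℝ) T,
        1 / (C * (T - t) ^ (1 / (r - 1))) ≤ |yinf t| ∧
        |yinf t| ≤ C / (T - t) ^ (1 / (r - 1)) := by
  set z0 : ℝ := (a / b) ^ (1 / r) with hz0def
  have hab : (0:ℝ) < a / b := div_pos ha hb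
  have hz0 : 0 < z0 := Real.rpow_pos_of_pos hab _
  set p : ℝ := 1 / (r - 1) with hpdef
  have hp : 0 < p := by rw [hpdef]; exact one_div_pos.mpr (by linarith)
  set M : ℝ := (2 * a / b) ^ (1 / r) with hMdef
  have hM0 : 0 < M := Real.rpow_pos_of_pos (by positivity) _
  set c1 : ℝ := (r - 1) * b with hc1def
  set c2 : ℝ := (r - 1) * (b / 2) with hc2def
  have hc1 : 0 < c1 := by rw [hc1def]; nlinarith
  have hc2 : 0 < c2 := by rw [hc2def]; nlinarith
  have hkey : ∀ A, z0 < A → ∀ t ∈ Icc (0:ℝ) T, Y A t < -z0 := fun A hA =>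
    my_key a b r T ha hb hr hT (Y A) (hY A hA).1 hA (hY A hA).2
  have hcomp : ∀ t ∈ Icc (0:ℝ) T, ∀ A A', z0 < A → A ≤ A' → Y A' t ≤ Y A t := by
    intro t ht A A' hA hAA'
    have hA' : z0 < A' := lt_of_lt_of_le hA hAA'
    exact my_comp a b r T ha hb hr hT (Y A) (Y A') (hY A hA).1 (hY A' hA').1
      (hkey A hA) (hkey A' hA')
      (by rw [(hY A hA).2, (hY A' hA').2]; linarith) t ht
  -- two-sided bounds for each A
  have hUB : ∀ A, z0 < A → ∀ t ∈ Ico (0:ℝ) T,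
      -Y A t ≤ max M ((c2 * (T - t)) ^ (1/(1-r))) := by
    intro A hA t ht
    have ht' : t ∈ Icc (0:ℝ) T := Ico_subset_Icc_self ht
    rcases le_or_gt M (-Y A t) with h | h
    · have h2 := ((my_bounds a b r T ha hb hr hT (Y A) (hY A hA).1 (hkey A hA)
        hA (hY A hA).2) t ht').2 h
      have hx : 0 < -Y A t := by have := hkey A hA t ht'; linarith
      have hβ : 0 < c2 * (T - t) := mul_pos hc2 (by linarith [ht.2])
      exact le_max_of_le_right (my_conv1 hr hx hβ h2)
    · exact le_max_of_le_left h.le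
  have hLB : ∀ A, z0 < A → ∀ t ∈ Ico (0:ℝ) T,
      (A ^ (1-r) + c1 * (T - t)) ^ (1/(1-r)) ≤ -Y A t := by
    intro A hA t ht
    have ht' : t ∈ Icc (0:ℝ) T := Ico_subset_Icc_self ht
    have h1 := ((my_bounds a b r T ha hb hr hT (Y A) (hY A hA).1 (hkey A hA)
      hA (hY A hA).2) t ht').1
    have hx : 0 < -Y A t := by have := hkey A hA t ht'; linarith
    have hβ : 0 < A ^ (1-r) + c1 * (T - t) := by
      have : (0:ℝ) < A ^ (1-r) := Real.rpow_pos_of_pos (by linarith) _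
      have : (0:ℝ) < c1 * (T - t) := mul_pos hc1 (by linarith [ht.2])
      linarith [Real.rpow_pos_of_pos (show (0:ℝ) < A by linarith) (1-r)]
    exact my_conv2 hr hx hβ h1
  refine ⟨fun t ht A A' hA hle => hcomp t (Ico_subset_Icc_self ht) A A' hA hle, ?_⟩
  set A0 : ℝ := z0 + 1 with hA0def
  have hA0 : z0 < A0 := by rw [hA0def]; linarith
  set yinf : ℝ → ℝ := fun t => ⨅ A : ℝ, Y (max A A0) t with hyinfdef
  have htend : ∀ t ∈ Ico (0:ℝ) T, Tendsto (fun A => Y A t) atTop (𝓝 (yinf t)) := by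
    intro t ht
    have ht' : t ∈ Icc (0:ℝ) T := Ico_subset_Icc_self ht
    have hanti : Antitone (fun A => Y (max A A0) t) := by
      intro A A' h
      exact hcomp t ht' (max A A0) (max A' A0)
        (lt_of_lt_of_le hA0 (le_max_right _ _)) (max_le_max h le_rfl)
    have hbdd : BddBelow (range fun A => Y (max A A0) t) := by
      refine ⟨-(max M ((c2 * (T - t)) ^ (1/(1-r)))), ?_⟩
      rintro x ⟨A, rfl⟩
      have := hUB (max A A0) (lt_of_lt_of_le hA0 (le_max_right _ _)) t ht
      simp only
      linarith
    have h0 := tendsto_atTop_ciInf hanti hbdd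
    refine Tendsto.congr' ?_ h0
    filter_upwards [eventually_ge_atTop A0] with A hA
    rw [max_eq_left hA]
  refine ⟨yinf, htend, ?_⟩
  refine ⟨max 1 (max (c1 ^ p) (max (M * T ^ p) (1/(c2 ^ p)))), le_max_left _ _, ?_⟩
  intro t ht
  set C : ℝ := max 1 (max (c1 ^ p) (max (M * T ^ p) (1/(c2 ^ p)))) with hCdef
  have hC1 : (1:ℝ) ≤ C := le_max_left _ _
  have hTt : 0 < T - t := by linarith [ht.2]
  set X : ℝ := (T - t) ^ p with hXdef
  have hX : 0 < X := Real.rpow_pos_of_pos hTt _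
  have hXT : X ≤ T ^ p := Real.rpow_le_rpow hTt.le (by linarith [ht.1]) hp.le
  have h1r : (1:ℝ)/(1-r) = -p := by
    rw [hpdef, show (1:ℝ) - r = -(r-1) by ring, div_neg]
  -- limit bounds
  have hyneg : yinf t ≤ -((c1 * (T - t)) ^ (1/(1-r))) := by
    have hlim : Tendsto (fun A : ℝ => -((A ^ (1-r) + c1 * (T - t)) ^ (1/(1-r)))) atTop
        (𝓝 (-((c1 * (T - t)) ^ (1/(1-r))))) := by
      have h1 : Tendsto (fun A : ℝ => A ^ (1-r)) atTop (𝓝 0) := by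
        have := tendsto_rpow_neg_atTop (show (0:ℝ) < r - 1 by linarith)
        refine this.congr (fun A => ?_)
        rw [show -(r-1) = 1 - r by ring]
      have h2 : Tendsto (fun A : ℝ => A ^ (1-r) + c1 * (T - t)) atTop
          (𝓝 (c1 * (T - t))) := by
        simpa using h1.add_const (c1 * (T - t))
      have h3 : ContinuousAt (fun x : ℝ => x ^ (1/(1-r))) (c1 * (T - t)) :=
        Real.continuousAt_rpow_const _ _ (Or.inl (mul_pos hc1 hTt).ne')
      exact (h3.tendsto.comp h2).neg
    refine le_of_tendsto_of_tendsto (htend t ht) hlim ?_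
    filter_upwards [eventually_ge_atTop A0] with A hA
    have := hLB A (lt_of_lt_of_le hA0 hA) t ht
    linarith
  have hylb : -(max M ((c2 * (T - t)) ^ (1/(1-r)))) ≤ yinf t := by
    refine ge_of_tendsto (htend t ht) ?_
    filter_upwards [eventually_ge_atTop A0] with A hA
    have := hUB A (lt_of_lt_of_le hA0 hA) t ht
    linarith
  -- rewrite the explicit powers
  have hc1X : (c1 * (T - t)) ^ (1/(1-r)) = (c1 ^ p * X)⁻¹ := by
    rw [h1r, Real.rpow_neg (by positivity), Real.mul_rpow hc1.le hTt.le]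
  have hc2X : (c2 * (T - t)) ^ (1/(1-r)) = (c2 ^ p * X)⁻¹ := by
    rw [h1r, Real.rpow_neg (by positivity), Real.mul_rpow hc2.le hTt.le]
  have hypos : 0 < -yinf t := by
    have : 0 < (c1 * (T - t)) ^ (1/(1-r)) :=
      Real.rpow_pos_of_pos (mul_pos hc1 hTt) _
    linarith
  have habs : |yinf t| = -yinf t := abs_of_neg (by linarith)
  rw [habs]
  constructor
  · -- lower bound
    have h1 : (c1 ^ p * X)⁻¹ ≤ -yinf t := by rw [← hc1X]; linarith
    have hc1p : 0 < c1 ^ p := Real.rpow_pos_of_pos hc1 _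
    have hCc1 : c1 ^ p ≤ C := le_trans (le_max_left _ _) (le_max_right _ _)
    have : 1 / (C * X) ≤ (c1 ^ p * X)⁻¹ := by
      rw [one_div]
      apply inv_anti₀ (by positivity)
      exact mul_le_mul_of_nonneg_right hCc1 hX.le
    linarith
  · -- upper bound
    have h2 : -yinf t ≤ max M ((c2 * (T - t)) ^ (1/(1-r))) := by linarith
    refine le_trans h2 (max_le ?_ ?_)
    · -- M ≤ C / X
      rw [le_div_iff₀ hX]
      calc M * X ≤ M * T ^ p := by
            exact mul_le_mul_of_nonneg_left hXT hM0.le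
        _ ≤ C := le_trans (le_max_left _ _) (le_trans (le_max_right _ _) (le_max_right _ _))
    · rw [hc2X]
      have hc2p : 0 < c2 ^ p := Real.rpow_pos_of_pos hc2 _
      have : (c2 ^ p * X)⁻¹ = (1/(c2 ^ p)) / X := by
        field_simp
      rw [this]
      gcongr
      exact (le_max_right _ _).trans ((le_max_right _ _).trans (le_max_right _ _))
end
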